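/- Let (X, d_X) be a finite pseudometric space, with m^X and m^Y irreducible aperiodic transition kernels on X and cost C(x,x') = d_X(x,x'). Define C^{(0)} := C and C^{(l+1)}_{ij} := d_W(m^X_i, m^Y_j; C^{(l)}), and let c := lim_{k→∞} d_WL^{(k)}((X, m^X, μ^X), (X, m^Y, μ^Y); C) where μ^X, μ^Y are the unique stationary distributions. Then there exists ρ ∈ [0,1), depending on m^X and m^Y, such that for all k ∈ ℕ and all (i,j): |C^{(k)}_{ij} − c| ≤ 2 ρ^k ‖C‖_∞; i.e., the matrices C^{(k)} converge exponentially fast to the constant matrix with value c. -/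

import Mathlib

open scoped BigOperators
open Filter Topology

/-- A probability vector on a finite type. -/
def IsProb {X : Type*} [Fintype X] (ν : X → ℝ) : Prop :=
  (∀ x, 0 ≤ ν x) ∧ ∑ x, ν x = 1

/-- `μ` is a coupling of `α` and `β`. -/
def IsCoupling {X Y : Type*} [Fintype X] [Fintype Y]
    (μ : X × Y → ℝ) (α : X → ℝ) (β : Y → ℝ) : Prop :=
  (∀ z, 0 ≤ μ z) ∧ (∀ x, ∑ y, μ (x, y) = α x) ∧ (∀ y, ∑ x, μ (x, y) = β y)

/-- A finite Markov chain: a transition kernel together with an initial distribution. -/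
structure MarkovChain (X : Type*) [Fintype X] where
  kernel : X → X → ℝ
  init : X → ℝ
  kernel_prob : ∀ x, IsProb (kernel x)
  init_prob : IsProb init

/-- A Markovian coupling between two finite Markov chains.  `trans t` is the
transition coupling used from time `t` to time `t+1` (i.e. `m^{(t+1)}`). -/
structure MarkovCoupling {X Y : Type*} [Fintype X] [Fintype Y]
    (MX : MarkovChain X) (MY : MarkovChain Y) where
  init : X × Y → ℝ
  trans : ℕ → X × Y → X × Y → ℝ
  init_coupling : IsCoupling init MX.init MY.init
  trans_coupling : ∀ t xy, IsCoupling (trans t xy) (MX.kernel xy.1) (MY.kernel xy.2)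

/-- Time-`t` law determined by an initial distribution and step kernels. -/
noncomputable def lawAux {X Y : Type*} [Fintype X] [Fintype Y]
    (ν : X × Y → ℝ) (m : ℕ → X × Y → X × Y → ℝ) : ℕ → X × Y → ℝ
  | 0 => ν
  | t + 1 => fun z => ∑ w : X × Y, m t w z * lawAux ν m t w

/-- The time-`t` law of a Markovian coupling. -/
noncomputable def MarkovCoupling.law {X Y : Type*} [Fintype X] [Fintype Y]
    {MX : MarkovChain X} {MY : MarkovChain Y} (π : MarkovCoupling MX MY) :
    ℕ → X × Y → ℝ :=
  lawAux π.init π.trans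

/-- `p` is a probability distribution on `ℕ`. -/
def IsProbNat (p : ℕ → ℝ) : Prop := (∀ t, 0 ≤ p t) ∧ HasSum p 1

/-- The Optimal Transport Markov (OTM) distance associated to `p`. -/
noncomputable def dOTM {X Y : Type*} [Fintype X] [Fintype Y] (p : ℕ → ℝ)
    (MX : MarkovChain X) (MY : MarkovChain Y) (C : X × Y → ℝ) : ℝ :=
  ⨅ π : MarkovCoupling MX MY, ∑' t, p t * ∑ z : X × Y, C z * π.law t z

/-- The Dirac mass at `k` on `ℕ`. -/
noncomputable def diracN (k : ℕ) : ℕ → ℝ := fun t => if t = k then 1 else 0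

/-- The depth-`k` WL distance, `d_WL^{(k)} = d_OTM^{δ_k}`. -/
noncomputable def dWL {X Y : Type*} [Fintype X] [Fintype Y] (k : ℕ)
    (MX : MarkovChain X) (MY : MarkovChain Y) (C : X × Y → ℝ) : ℝ :=
  dOTM (diracN k) MX MY C

/-- The optimal transport cost between `α` and `β` with cost matrix `C`. -/
noncomputable def dW {X Y : Type*} [Fintype X] [Fintype Y]
    (α : X → ℝ) (β : Y → ℝ) (C : X × Y → ℝ) : ℝ :=
  ⨅ μ : {μ : X × Y → ℝ // IsCoupling μ α β}, ∑ z : X × Y, C z * μ.1 z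

/-- `d` is a pseudometric on `X`. -/
def IsPseudometric {X : Type*} (d : X → X → ℝ) : Prop :=
  (∀ x y, 0 ≤ d x y) ∧ (∀ x, d x x = 0) ∧ (∀ x y, d x y = d y x) ∧
  (∀ x y z, d x z ≤ d x y + d y z)

/-- The `t`-step transition kernel. -/
noncomputable def kpow {X : Type*} [Fintype X] [DecidableEq X]
    (m : X → X → ℝ) : ℕ → X → X → ℝ
  | 0 => fun x x' => if x = x' then 1 else 0
  | t + 1 => fun x x' => ∑ y, m x y * kpow m t y x'

/-- A transition kernel is irreducible if every state can reach every state in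
some positive finite number of steps. -/
def KernelIrreducible {X : Type*} [Fintype X] [DecidableEq X] (m : X → X → ℝ) : Prop :=
  ∀ x x', ∃ t, 1 ≤ t ∧ 0 < kpow m t x x'

/-- A transition kernel is aperiodic if for every state the gcd of its return
times is `1` (i.e. every common divisor of the return times is `1`). -/
def KernelAperiodic {X : Type*} [Fintype X] [DecidableEq X] (m : X → X → ℝ) : Prop :=
  ∀ x, ∀ d : ℕ, (∀ t, 1 ≤ t → 0 < kpow m t x x → d ∣ t) → d = 1

/-- `μ` is stationary for the transition kernel `m`. -/
def IsStationaryFor {X : Type*} [Fintype X] (m : X → X → ℝ) (μ : X → ℝ) : Prop :=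
  ∀ x', ∑ x, m x x' * μ x = μ x'

/-- The recursively defined cost matrices `C^{(l)}` of the WL iteration. -/
noncomputable def CmatWL {X : Type*} [Fintype X]
    (mX mY : X → X → ℝ) (C : X × X → ℝ) : ℕ → X × X → ℝ
  | 0 => C
  | l + 1 => fun z => dW (mX z.1) (mY z.2) (CmatWL mX mY C l)

/-- The entrywise supremum norm. -/
noncomputable def supNorm {Z : Type*} [Fintype Z] (C : Z → ℝ) : ℝ := ⨆ z, |C z|

namespace Stmt18Aux
set_option linter.unusedSectionVars false

open Finset

variable {X : Type*} [Fintype X] [DecidableEq X]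

/-! ### Coupling basics -/

lemma isCoupling_prod {Y : Type*} [Fintype Y] {α : X → ℝ} {β : Y → ℝ}
    (hα : IsProb α) (hβ : IsProb β) :
    IsCoupling (fun z : X × Y => α z.1 * β z.2) α β := by
  refine ⟨fun z => mul_nonneg (hα.1 _) (hβ.1 _), fun x => ?_, fun y => ?_⟩
  · simp [← Finset.mul_sum, hβ.2]
  · simp [← Finset.sum_mul, hα.2]

lemma coupling_sum_one {Y : Type*} [Fintype Y] {μ : X × Y → ℝ} {α : X → ℝ} {β : Y → ℝ}
    (h : IsCoupling μ α β) (hα : IsProb α) : ∑ z : X × Y, μ z = 1 := by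
  rw [Fintype.sum_prod_type]
  calc ∑ x, ∑ y, μ (x, y) = ∑ x, α x := by
        exact Finset.sum_congr rfl fun x _ => h.2.1 x
    _ = 1 := hα.2

lemma coupling_le_one {Y : Type*} [Fintype Y] {μ : X × Y → ℝ} {α : X → ℝ} {β : Y → ℝ}
    (h : IsCoupling μ α β) (hα : IsProb α) (z : X × Y) : μ z ≤ 1 := by
  have := coupling_sum_one h hα
  calc μ z ≤ ∑ w : X × Y, μ w := Finset.single_le_sum (fun w _ => h.1 w) (Finset.mem_univ z)
    _ = 1 := this

theorem couplingNonempty {Y : Type*} [Fintype Y] (α : X → ℝ) (β : Y → ℝ)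
    (hα : IsProb α) (hβ : IsProb β) : Nonempty {μ : X × Y → ℝ // IsCoupling μ α β} :=
  ⟨⟨_, isCoupling_prod hα hβ⟩⟩

/-! ### dW basics -/

lemma bddBelow_dW {Y : Type*} [Fintype Y] {α : X → ℝ} {β : Y → ℝ} (hα : IsProb α)
    (C : X × Y → ℝ) :
    BddBelow (Set.range fun μ : {μ : X × Y → ℝ // IsCoupling μ α β} =>
      ∑ z : X × Y, C z * μ.1 z) := by
  refine ⟨-∑ z : X × Y, |C z|, ?_⟩
  rintro r ⟨μ, rfl⟩
  have h1 : ∀ z : X × Y, -|C z| ≤ C z * μ.1 z := by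
    intro z
    calc -|C z| = -|C z| * 1 := by ring
      _ ≤ -(|C z| * μ.1 z) := by
          rw [neg_mul]
          exact neg_le_neg (mul_le_mul_of_nonneg_left (coupling_le_one μ.2 hα z) (abs_nonneg _))
      _ ≤ C z * μ.1 z := by
          rw [neg_le]
          calc -(C z * μ.1 z) ≤ |C z * μ.1 z| := neg_le_abs _
            _ = |C z| * |μ.1 z| := abs_mul _ _
            _ = |C z| * μ.1 z := by rw [abs_of_nonneg (μ.2.1 z)]
  calc -∑ z : X × Y, |C z| = ∑ z : X × Y, -|C z| := by rw [Finset.sum_neg_distrib]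
    _ ≤ _ := Finset.sum_le_sum fun z _ => h1 z

lemma dW_le_coupling {Y : Type*} [Fintype Y] {α : X → ℝ} {β : Y → ℝ} (hα : IsProb α)
    {C : X × Y → ℝ} {μ : X × Y → ℝ} (hμ : IsCoupling μ α β) :
    dW α β C ≤ ∑ z : X × Y, C z * μ z :=
  ciInf_le (bddBelow_dW hα C) (⟨μ, hμ⟩ : {μ : X × Y → ℝ // IsCoupling μ α β})

lemma le_dW {Y : Type*} [Fintype Y] {α : X → ℝ} {β : Y → ℝ} (hα : IsProb α) (hβ : IsProb β)
    {C : X × Y → ℝ} {b : ℝ} (h : ∀ μ : X × Y → ℝ, IsCoupling μ α β → b ≤ ∑ z : X × Y, C z * μ z) :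
    b ≤ dW α β C := by
  haveI := couplingNonempty α β hα hβ
  exact le_ciInf fun μ => h μ.1 μ.2

lemma exists_coupling_dW_lt {Y : Type*} [Fintype Y] {α : X → ℝ} {β : Y → ℝ}
    (hα : IsProb α) (hβ : IsProb β) (C : X × Y → ℝ) {ε : ℝ} (hε : 0 < ε) :
    ∃ μ : X × Y → ℝ, IsCoupling μ α β ∧ ∑ z : X × Y, C z * μ z ≤ dW α β C + ε := by
  haveI := couplingNonempty α β hα hβ
  have h : dW α β C < dW α β C + ε := by linarith
  obtain ⟨μ, hμ⟩ := exists_lt_of_ciInf_lt h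
  exact ⟨μ.1, μ.2, le_of_lt hμ⟩

lemma dW_ge_min {Y : Type*} [Fintype Y] {α : X → ℝ} {β : Y → ℝ} (hα : IsProb α) (hβ : IsProb β)
    {C : X × Y → ℝ} {b : ℝ} (hb : ∀ z, b ≤ C z) : b ≤ dW α β C := by
  refine le_dW hα hβ fun μ hμ => ?_
  calc b = b * 1 := by ring
    _ = b * ∑ z : X × Y, μ z := by rw [coupling_sum_one hμ hα]
    _ = ∑ z : X × Y, b * μ z := by rw [Finset.mul_sum]
    _ ≤ ∑ z : X × Y, C z * μ z := Finset.sum_le_sum fun z _ =>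
        mul_le_mul_of_nonneg_right (hb z) (hμ.1 z)

lemma dW_le_max {Y : Type*} [Fintype Y] {α : X → ℝ} {β : Y → ℝ} (hα : IsProb α) (hβ : IsProb β)
    {C : X × Y → ℝ} {b : ℝ} (hb : ∀ z, C z ≤ b) : dW α β C ≤ b := by
  refine le_trans (dW_le_coupling hα (isCoupling_prod hα hβ)) ?_
  have hsum := coupling_sum_one (isCoupling_prod hα hβ) hα
  calc ∑ z : X × Y, C z * (α z.1 * β z.2) ≤ ∑ z : X × Y, b * (α z.1 * β z.2) :=
        Finset.sum_le_sum fun z _ => mul_le_mul_of_nonneg_right (hb z)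
          (mul_nonneg (hα.1 _) (hβ.1 _))
    _ = b * ∑ z : X × Y, (α z.1 * β z.2) := by rw [Finset.mul_sum]
    _ = b := by rw [hsum, mul_one]

end Stmt18Aux
namespace Stmt18Aux
set_option linter.unusedSectionVars false

open Finset

variable {X : Type*} [Fintype X] [DecidableEq X]

/-! ### kpow basics -/

lemma kpow_nonneg {m : X → X → ℝ} (hm : ∀ x, IsProb (m x)) :
    ∀ t x x', 0 ≤ kpow m t x x' := by
  intro t
  induction t with
  | zero => intro x x'; simp [kpow]; split <;> norm_num
  | succ t ih =>
    intro x x'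
    exact Finset.sum_nonneg fun y _ => mul_nonneg ((hm x).1 y) (ih y x')

lemma kpow_prob {m : X → X → ℝ} (hm : ∀ x, IsProb (m x)) (t : ℕ) (x : X) :
    IsProb (kpow m t x) := by
  induction t generalizing x with
  | zero => exact ⟨fun x' => kpow_nonneg hm 0 x x', by simp [kpow]⟩
  | succ t ih =>
    refine ⟨fun x' => kpow_nonneg hm (t+1) x x', ?_⟩
    show ∑ x', ∑ y, m x y * kpow m t y x' = 1
    rw [Finset.sum_comm]
    calc ∑ y, ∑ x', m x y * kpow m t y x' = ∑ y, m x y * ∑ x', kpow m t y x' := by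
          simp [Finset.mul_sum]
      _ = ∑ y, m x y := by
          refine Finset.sum_congr rfl fun y _ => ?_
          rw [(ih y).2, mul_one]
      _ = 1 := (hm x).2

lemma kpow_one {m : X → X → ℝ} (x x' : X) : kpow m 1 x x' = m x x' := by
  show ∑ y, m x y * kpow m 0 y x' = m x x'
  simp [kpow]

lemma kpow_add (m : X → X → ℝ) (s t : ℕ) (x x' : X) :
    kpow m (s + t) x x' = ∑ y, kpow m s x y * kpow m t y x' := by
  induction s generalizing x with
  | zero => simp [kpow]
  | succ s ih =>
    have e : s + 1 + t = (s + t) + 1 := by omega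
    rw [e]
    show ∑ y, m x y * kpow m (s + t) y x' = _
    calc ∑ y, m x y * kpow m (s + t) y x'
        = ∑ y, m x y * ∑ z, kpow m s y z * kpow m t z x' := by
          refine Finset.sum_congr rfl fun y _ => by rw [ih]
      _ = ∑ y, ∑ z, m x y * (kpow m s y z * kpow m t z x') := by
          simp [Finset.mul_sum]
      _ = ∑ z, (∑ y, m x y * kpow m s y z) * kpow m t z x' := by
          rw [Finset.sum_comm]
          simp [Finset.sum_mul, mul_assoc]
      _ = ∑ z, kpow m (s+1) x z * kpow m t z x' := rfl

lemma kpow_pos_add {m : X → X → ℝ} (hm : ∀ x, IsProb (m x)) {s t : ℕ} {x y x' : X}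
    (hs : 0 < kpow m s x y) (ht : 0 < kpow m t y x') : 0 < kpow m (s + t) x x' := by
  rw [kpow_add]
  have : 0 < kpow m s x y * kpow m t y x' := mul_pos hs ht
  calc (0:ℝ) < kpow m s x y * kpow m t y x' := this
    _ ≤ ∑ y', kpow m s x y' * kpow m t y' x' :=
      Finset.single_le_sum (fun y' _ => mul_nonneg (kpow_nonneg hm s x y') (kpow_nonneg hm t y' x'))
        (Finset.mem_univ y)

/-- a row of a probability kernel has a positive entry -/
lemma exists_pos_entry {ν : X → ℝ} (hν : IsProb ν) : ∃ x, 0 < ν x := by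
  by_contra h
  push_neg at h
  have : ∑ x, ν x ≤ 0 := Finset.sum_nonpos fun x _ => h x
  rw [hν.2] at this; linarith

lemma allpos_succ {m : X → X → ℝ} (hm : ∀ x, IsProb (m x)) {t : ℕ}
    (h : ∀ x x', 0 < kpow m t x x') : ∀ x x', 0 < kpow m (t+1) x x' := by
  intro x x'
  obtain ⟨y, hy⟩ := exists_pos_entry (hm x)
  have : (1 : ℕ) + t = t + 1 := by omega
  rw [← this]
  exact kpow_pos_add hm (by rwa [kpow_one]) (h y x')

lemma allpos_mono {m : X → X → ℝ} (hm : ∀ x, IsProb (m x)) {t s : ℕ} (hts : t ≤ s)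
    (h : ∀ x x', 0 < kpow m t x x') : ∀ x x', 0 < kpow m s x x' := by
  induction s with
  | zero =>
    intro x x'
    have h0 : t = 0 := by omega
    subst h0
    exact h x x'
  | succ s ih =>
    rcases Nat.lt_or_ge t (s+1) with hlt | hge
    · exact allpos_succ hm (ih (by omega))
    · have h0 : t = s + 1 := by omega
      subst h0; exact h

end Stmt18Aux
namespace Stmt18Aux
set_option linter.unusedSectionVars false

open Finset

/-! ### Numerical semigroup: an additively closed set of naturals whose
positive elements have no common divisor other than 1 is cofinite. -/

lemma addclosed_cofinite (S : Set ℕ) (h0 : 0 ∈ S)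
    (hadd : ∀ a ∈ S, ∀ b ∈ S, a + b ∈ S)
    (hgcd : ∀ d : ℕ, (∀ t ∈ S, d ∣ t) → d = 1) :
    ∃ N, ∀ n, N ≤ n → n ∈ S := by
  classical
  -- the subgroup of ℤ generated by S
  set H : AddSubgroup ℤ := AddSubgroup.closure ((fun n : ℕ => (n : ℤ)) '' S) with hH
  obtain ⟨g, hg⟩ := Int.subgroup_cyclic H
  -- every element of H is divisible by g
  have hdvd : ∀ z ∈ H, g ∣ z := by
    intro z hz
    rw [hg, AddSubgroup.mem_closure_singleton] at hz
    obtain ⟨n, hn⟩ := hz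
    exact ⟨n, by rw [← hn, smul_eq_mul]; ring⟩
  -- g.natAbs divides every element of S
  have hdvdS : ∀ t ∈ S, g.natAbs ∣ t := by
    intro t ht
    have : (t : ℤ) ∈ H := AddSubgroup.subset_closure ⟨t, ht, rfl⟩
    have := hdvd _ this
    exact Int.ofNat_dvd.mp ((Int.natAbs_dvd).mpr this)
  have hg1 : g.natAbs = 1 := hgcd _ hdvdS
  -- hence 1 ∈ H
  have h1H : (1 : ℤ) ∈ H := by
    rw [hg]
    have : g = 1 ∨ g = -1 := Int.natAbs_eq_iff.mp hg1
    rcases this with h | h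
    · rw [h]; exact AddSubgroup.mem_closure_singleton.mpr ⟨1, by simp⟩
    · rw [h]; exact AddSubgroup.mem_closure_singleton.mpr ⟨-1, by simp⟩
  -- every element of H is a difference of two elements of S
  have hdiff : ∀ z ∈ H, ∃ p ∈ S, ∃ q ∈ S, (z : ℤ) = (p : ℤ) - (q : ℤ) := by
    intro z hz
    induction hz using AddSubgroup.closure_induction with
    | mem w hw =>
      obtain ⟨p, hp, rfl⟩ := hw
      exact ⟨p, hp, 0, h0, by simp⟩
    | zero => exact ⟨0, h0, 0, h0, by simp⟩
    | add a b _ _ ha hb =>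
      obtain ⟨p, hp, q, hq, rfl⟩ := ha
      obtain ⟨p', hp', q', hq', rfl⟩ := hb
      exact ⟨p + p', hadd _ hp _ hp', q + q', hadd _ hq _ hq', by push_cast; ring⟩
    | neg a _ ha =>
      obtain ⟨p, hp, q, hq, rfl⟩ := ha
      exact ⟨q, hq, p, hp, by ring⟩
  obtain ⟨p, hp, q, hq, hpq⟩ := hdiff 1 h1H
  -- so q ∈ S and q + 1 = p ∈ S
  have hp1 : p = q + 1 := by omega
  -- multiples
  have hmul : ∀ (k a : ℕ), a ∈ S → k * a ∈ S := by
    intro k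
    induction k with
    | zero => intro a _; simpa using h0
    | succ k ih =>
      intro a ha
      have : (k+1) * a = k * a + a := by ring
      rw [this]
      exact hadd _ (ih a ha) _ ha
  rcases Nat.eq_zero_or_pos q with hq0 | hqpos
  · -- then 1 ∈ S
    refine ⟨0, fun n _ => ?_⟩
    have h1S : 1 ∈ S := by
      have : p = 1 := by omega
      rwa [this] at hp
    simpa using hmul n 1 h1S
  · refine ⟨q * q, fun n hn => ?_⟩
    -- n = (n/q - n%q) * q + (n%q) * (q+1)
    have hr : n % q < q := Nat.mod_lt _ hqpos
    have hdm : q * (n / q) + n % q = n := Nat.div_add_mod n q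
    have hle : n % q ≤ n / q := by
      have : q ≤ n / q := by
        exact (Nat.le_div_iff_mul_le hqpos).mpr hn
      omega
    have h2 : (n % q) * q ≤ (n / q) * q := Nat.mul_le_mul_right _ hle
    have key : n = (n / q - n % q) * q + (n % q) * (q + 1) := by
      rw [Nat.sub_mul, Nat.mul_succ, ← Nat.add_assoc, Nat.sub_add_cancel h2,
        Nat.mul_comm (n / q) q]
      omega
    rw [key]
    exact hadd _ (hmul _ _ hq) _ (hmul _ _ (hp1 ▸ hp))
end Stmt18Aux
namespace Stmt18Aux
set_option linter.unusedSectionVars false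

open Finset

variable {X : Type*} [Fintype X] [DecidableEq X]

/-- Primitivity: an irreducible aperiodic kernel has a power with all entries positive. -/
lemma exists_primitive {m : X → X → ℝ} (hm : ∀ x, IsProb (m x))
    (hirr : KernelIrreducible m) (haper : KernelAperiodic m) :
    ∃ T, 1 ≤ T ∧ ∀ x x', 0 < kpow m T x x' := by
  classical
  have hret : ∀ x : X, ∃ N, ∀ n, N ≤ n → 0 < kpow m n x x := by
    intro x
    exact addclosed_cofinite {t : ℕ | 0 < kpow m t x x}
      (by simp [kpow])
      (fun a ha b hb => kpow_pos_add hm ha hb)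
      (fun d hd => haper x d (fun t ht hpos => hd t hpos))
  choose N hN using hret
  choose tt htt1 htt2 using hirr
  set T : ℕ := (Finset.univ.sup N) + (Finset.univ.sup (fun p : X × X => tt p.1 p.2)) + 1 with hT
  refine ⟨T, by omega, fun x x' => ?_⟩
  have hNx : N x ≤ Finset.univ.sup N := Finset.le_sup (Finset.mem_univ x)
  have htx : tt x x' ≤ Finset.univ.sup (fun p : X × X => tt p.1 p.2) :=
    Finset.le_sup (f := fun p : X × X => tt p.1 p.2) (Finset.mem_univ (x, x'))
  have hsplit : T = (T - tt x x') + tt x x' := by omega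
  rw [hsplit]
  exact kpow_pos_add hm (hN x _ (by omega)) (htt2 x x')

end Stmt18Aux
namespace Stmt18Aux
set_option linter.unusedSectionVars false

open Finset

variable {X : Type*} [Fintype X] [DecidableEq X]

lemma prob_entry_le_one {ν : X → ℝ} (hν : IsProb ν) (x : X) : ν x ≤ 1 := by
  calc ν x ≤ ∑ y, ν y := Finset.single_le_sum (fun y _ => hν.1 y) (Finset.mem_univ x)
    _ = 1 := hν.2

lemma sum_prod_le_one {ν ν' : X → ℝ} (hν : IsProb ν) (hν' : IsProb ν') :
    ∑ a, ν a * ν' a ≤ 1 := by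
  calc ∑ a, ν a * ν' a ≤ ∑ a, ν a := Finset.sum_le_sum fun a _ => by
        calc ν a * ν' a ≤ ν a * 1 :=
          mul_le_mul_of_nonneg_left (prob_entry_le_one hν' a) (hν.1 a)
        _ = ν a := mul_one _
    _ = 1 := hν.2

section CM

variable [Nonempty X] (mX mY : X → X → ℝ) (C : X × X → ℝ)

/-- minimum entry of `C^{(k)}` -/
noncomputable def mLow (k : ℕ) : ℝ :=
  Finset.univ.inf' Finset.univ_nonempty (CmatWL mX mY C k)

/-- maximum entry of `C^{(k)}` -/
noncomputable def mHigh (k : ℕ) : ℝ :=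
  Finset.univ.sup' Finset.univ_nonempty (CmatWL mX mY C k)

variable {mX mY C}

lemma mLow_le (k : ℕ) (z : X × X) : mLow mX mY C k ≤ CmatWL mX mY C k z :=
  Finset.inf'_le _ (Finset.mem_univ z)

lemma le_mHigh (k : ℕ) (z : X × X) : CmatWL mX mY C k z ≤ mHigh mX mY C k :=
  Finset.le_sup' _ (Finset.mem_univ z)

lemma mLow_le_mHigh (k : ℕ) : mLow mX mY C k ≤ mHigh mX mY C k :=
  le_trans (mLow_le k (Classical.arbitrary _)) (le_mHigh k _)

variable (hmX : ∀ x, IsProb (mX x)) (hmY : ∀ x, IsProb (mY x))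

include hmX hmY

lemma cmat_succ_ge (k : ℕ) (z : X × X) :
    mLow mX mY C k ≤ CmatWL mX mY C (k + 1) z := by
  show mLow mX mY C k ≤ dW (mX z.1) (mY z.2) (CmatWL mX mY C k)
  exact dW_ge_min (hmX z.1) (hmY z.2) (mLow_le k)

lemma cmat_succ_le (k : ℕ) (z : X × X) :
    CmatWL mX mY C (k + 1) z ≤ mHigh mX mY C k := by
  show dW (mX z.1) (mY z.2) (CmatWL mX mY C k) ≤ mHigh mX mY C k
  exact dW_le_max (hmX z.1) (hmY z.2) (le_mHigh k)

lemma mLow_mono : Monotone (mLow mX mY C) := by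
  refine monotone_nat_of_le_succ fun k => ?_
  exact Finset.le_inf' _ _ fun z _ => cmat_succ_ge hmX hmY k z

lemma mHigh_anti : Antitone (mHigh mX mY C) := by
  refine antitone_nat_of_succ_le fun k => ?_
  exact Finset.sup'_le _ _ fun z _ => cmat_succ_le hmX hmY k z

lemma cmat_nonneg (hC : ∀ z, 0 ≤ C z) (k : ℕ) (z : X × X) : 0 ≤ CmatWL mX mY C k z := by
  induction k generalizing z with
  | zero => exact hC z
  | succ k ih =>
    show (0:ℝ) ≤ dW (mX z.1) (mY z.2) (CmatWL mX mY C k)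
    exact dW_ge_min (hmX z.1) (hmY z.2) ih

lemma mLow_nonneg (hC : ∀ z, 0 ≤ C z) (k : ℕ) : 0 ≤ mLow mX mY C k :=
  Finset.le_inf' _ _ fun z _ => cmat_nonneg hmX hmY hC k z

end CM

end Stmt18Aux
namespace Stmt18Aux
set_option linter.unusedSectionVars false

open Finset

variable {X : Type*} [Fintype X] [DecidableEq X]

/-- The "independent until they meet" coupling kernel of two copies of `m`. -/
noncomputable def coal (m : X → X → ℝ) : (X × X) → (X × X) → ℝ := fun p q =>
  if p.1 = p.2 then (if q.1 = q.2 then m p.1 q.1 else 0) else m p.1 q.1 * m p.2 q.2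

/-- the set of non-diagonal pairs -/
def offPairs (X : Type*) [Fintype X] [DecidableEq X] : Finset (X × X) :=
  Finset.univ.filter (fun p => p.1 ≠ p.2)

lemma coal_nonneg {m : X → X → ℝ} (hm : ∀ x, IsProb (m x)) (p q : X × X) :
    0 ≤ coal m p q := by
  unfold coal
  split
  · split
    · exact (hm p.1).1 q.1
    · exact le_refl 0
  · exact mul_nonneg ((hm p.1).1 q.1) ((hm p.2).1 q.2)

lemma coal_prob {m : X → X → ℝ} (hm : ∀ x, IsProb (m x)) (p : X × X) :
    IsProb (coal m p) := by
  refine ⟨coal_nonneg hm p, ?_⟩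
  show ∑ q : X × X, coal m p q = 1
  unfold coal
  rcases eq_or_ne p.1 p.2 with h | h
  · simp only [if_pos h]
    rw [Fintype.sum_prod_type]
    calc ∑ a, ∑ b, (if a = b then m p.1 a else 0) = ∑ a, m p.1 a := by
          refine Finset.sum_congr rfl fun a _ => ?_
          simp
      _ = 1 := (hm p.1).2
  · simp only [if_neg h]
    rw [Fintype.sum_prod_type]
    calc ∑ a, ∑ b, m p.1 a * m p.2 b = ∑ a, m p.1 a * ∑ b, m p.2 b := by
          simp [Finset.mul_sum]
      _ = 1 := by simp [(hm p.2).2, (hm p.1).2]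

/-- starting from the diagonal, the coalescing chain stays on the diagonal -/
lemma coal_diag_off (m : X → X → ℝ) (t : ℕ) (x : X) :
    ∑ p ∈ offPairs X, kpow (coal m) t (x, x) p = 0 := by
  induction t generalizing x with
  | zero =>
    refine Finset.sum_eq_zero fun p hp => ?_
    have hne : (x, x) ≠ p := by
      rintro rfl
      simp [offPairs] at hp
    simp [kpow, hne]
  | succ t ih =>
    show ∑ p ∈ offPairs X, ∑ q : X × X, coal m (x, x) q * kpow (coal m) t q p = 0
    rw [Finset.sum_comm]
    refine Finset.sum_eq_zero fun q _ => ?_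
    rw [← Finset.mul_sum]
    rcases eq_or_ne q.1 q.2 with h | h
    · have hq : q = (q.1, q.1) := by
        rw [Prod.ext_iff]; exact ⟨rfl, h.symm⟩
      rw [hq]
      rw [ih q.1, mul_zero]
    · have hc : coal m (x, x) q = 0 := by simp [coal, h]
      rw [hc, zero_mul]

/-- bilinear rearrangement -/
lemma sum_pair_factor (f g : X → ℝ) (F G : X → X → ℝ) :
    ∑ q : X × X, (f q.1 * g q.2) * (∑ a, F q.1 a * G q.2 a)
      = ∑ a, (∑ u, f u * F u a) * (∑ v, g v * G v a) := by
  rw [Fintype.sum_prod_type]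
  have h1 : ∀ u, ∑ v, (f u * g v) * (∑ a, F u a * G v a)
      = ∑ a, (f u * F u a) * (∑ v, g v * G v a) := by
    intro u
    calc ∑ v, (f u * g v) * (∑ a, F u a * G v a)
        = ∑ v, ∑ a, (f u * F u a) * (g v * G v a) := by
          refine Finset.sum_congr rfl fun v _ => ?_
          rw [Finset.mul_sum]
          refine Finset.sum_congr rfl fun a _ => by ring
      _ = ∑ a, ∑ v, (f u * F u a) * (g v * G v a) := Finset.sum_comm
      _ = ∑ a, (f u * F u a) * (∑ v, g v * G v a) := by
          refine Finset.sum_congr rfl fun a _ => ?_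
          rw [Finset.mul_sum]
  calc ∑ u, ∑ v, (f u * g v) * (∑ a, F u a * G v a)
      = ∑ u, ∑ a, (f u * F u a) * (∑ v, g v * G v a) :=
        Finset.sum_congr rfl fun u _ => h1 u
    _ = ∑ a, ∑ u, (f u * F u a) * (∑ v, g v * G v a) := Finset.sum_comm
    _ = ∑ a, (∑ u, f u * F u a) * (∑ v, g v * G v a) := by
        refine Finset.sum_congr rfl fun a _ => ?_
        rw [Finset.sum_mul]

/-- off-diagonal mass of the coalescing chain is dominated by that of the independent chain -/
lemma coal_off_le {m : X → X → ℝ} (hm : ∀ x, IsProb (m x)) (t : ℕ) (x x' : X) :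
    ∑ p ∈ offPairs X, kpow (coal m) t (x, x') p
      ≤ 1 - ∑ a, kpow m t x a * kpow m t x' a := by
  induction t generalizing x x' with
  | zero =>
    have hR : ∑ a, kpow m 0 x a * kpow m 0 x' a = if x = x' then 1 else 0 := by
      rcases eq_or_ne x x' with h | h
      · subst h
        have hterm : ∀ a, kpow m 0 x a * kpow m 0 x a = if x = a then (1:ℝ) else 0 := by
          intro a
          simp only [kpow]
          by_cases h2 : x = a <;> simp [h2]
        rw [if_pos rfl, Finset.sum_congr rfl fun a _ => hterm a, Finset.sum_ite_eq]
        simp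
      · rw [if_neg h]
        refine Finset.sum_eq_zero fun a _ => ?_
        simp only [kpow]
        by_cases h2 : x = a
        · have h3 : ¬ (x' = a) := fun hh => h (by rw [h2, hh])
          simp [h2, h3]
        · simp [h2]
    rw [hR]
    rcases eq_or_ne x x' with h | h
    · subst h
      rw [coal_diag_off]
      simp
    · rw [if_neg h]
      have : ∑ p ∈ offPairs X, kpow (coal m) 0 (x, x') p
          = ∑ p ∈ offPairs X, (if (x, x') = p then (1:ℝ) else 0) := rfl
      rw [this, Finset.sum_ite_eq]
      have : (x, x') ∈ offPairs X := by simp [offPairs, h]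
      rw [if_pos this]
      norm_num
  | succ t ih =>
    rcases eq_or_ne x x' with h | h
    · subst h
      rw [coal_diag_off]
      have := sum_prod_le_one (kpow_prob hm (t+1) x) (kpow_prob hm (t+1) x)
      linarith
    · show ∑ p ∈ offPairs X, ∑ q : X × X, coal m (x, x') q * kpow (coal m) t q p ≤ _
      rw [Finset.sum_comm]
      have hcoal : ∀ q : X × X, coal m (x, x') q = m x q.1 * m x' q.2 := by
        intro q; simp [coal, h]
      calc ∑ q : X × X, ∑ p ∈ offPairs X, coal m (x, x') q * kpow (coal m) t q p
          = ∑ q : X × X, (m x q.1 * m x' q.2) * ∑ p ∈ offPairs X, kpow (coal m) t q p := by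
            refine Finset.sum_congr rfl fun q _ => ?_
            rw [← Finset.mul_sum, hcoal q]
        _ ≤ ∑ q : X × X, (m x q.1 * m x' q.2) * (1 - ∑ a, kpow m t q.1 a * kpow m t q.2 a) := by
            refine Finset.sum_le_sum fun q _ => ?_
            refine mul_le_mul_of_nonneg_left ?_ (mul_nonneg ((hm x).1 q.1) ((hm x').1 q.2))
            have := ih q.1 q.2
            calc ∑ p ∈ offPairs X, kpow (coal m) t q p
                = ∑ p ∈ offPairs X, kpow (coal m) t (q.1, q.2) p := by rw [Prod.mk.eta]
              _ ≤ _ := this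
        _ = (∑ q : X × X, m x q.1 * m x' q.2)
            - ∑ q : X × X, (m x q.1 * m x' q.2) * (∑ a, kpow m t q.1 a * kpow m t q.2 a) := by
            rw [← Finset.sum_sub_distrib]
            refine Finset.sum_congr rfl fun q _ => by ring
        _ = 1 - ∑ a, kpow m (t+1) x a * kpow m (t+1) x' a := by
            have h1 : ∑ q : X × X, m x q.1 * m x' q.2 = 1 := by
              have := (coal_prob hm (x, x')).2
              calc ∑ q : X × X, m x q.1 * m x' q.2
                  = ∑ q : X × X, coal m (x, x') q := by
                    refine Finset.sum_congr rfl fun q _ => (hcoal q).symm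
                _ = 1 := this
            rw [h1, sum_pair_factor]
            rfl

/-- evolution of a vector by a kernel, expressed with `kpow` -/
lemma evol_kpow {Z : Type*} [Fintype Z] [DecidableEq Z] (m : Z → Z → ℝ) (χ : ℕ → Z → ℝ)
    (hrec : ∀ t z, χ (t+1) z = ∑ w, m w z * χ t w) (s : ℕ) :
    ∀ (t : ℕ) (z : Z), χ (s + t) z = ∑ w, kpow m t w z * χ s w := by
  intro t
  induction t with
  | zero =>
    intro z
    simp only [Nat.add_zero]
    have : ∑ w, kpow m 0 w z * χ s w = ∑ w, (if w = z then (1:ℝ) else 0) * χ s w := rfl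
    rw [this]
    rw [Finset.sum_congr rfl (fun w _ => by rw [ite_mul, one_mul, zero_mul])]
    rw [Finset.sum_ite_eq' Finset.univ z (χ s)]
    simp
  | succ t ih =>
    intro z
    have e : s + (t + 1) = (s + t) + 1 := by omega
    rw [e, hrec (s+t) z]
    calc ∑ w, m w z * χ (s + t) w
        = ∑ w, m w z * ∑ v, kpow m t v w * χ s v := by
          refine Finset.sum_congr rfl fun w _ => by rw [ih w]
      _ = ∑ w, ∑ v, (kpow m t v w * m w z) * χ s v := by
          refine Finset.sum_congr rfl fun w _ => ?_
          rw [Finset.mul_sum]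
          exact Finset.sum_congr rfl fun v _ => by ring
      _ = ∑ v, (∑ w, kpow m t v w * m w z) * χ s v := by
          rw [Finset.sum_comm]
          exact Finset.sum_congr rfl fun v _ => by rw [Finset.sum_mul]
      _ = ∑ v, kpow m (t+1) v z * χ s v := by
          refine Finset.sum_congr rfl fun v _ => ?_
          congr 1
          rw [kpow_add m t 1]
          exact Finset.sum_congr rfl fun w _ => by rw [kpow_one]

/-- geometric decay of the off-diagonal mass of the coalescing chain -/
lemma coal_off_pow {m : X → X → ℝ} (hm : ∀ x, IsProb (m x)) {T : ℕ} {δ : ℝ}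
    (hδ1 : δ ≤ 1) (hδ : ∀ x x', δ ≤ ∑ a, kpow m T x a * kpow m T x' a) :
    ∀ (n : ℕ) (w : X × X), ∑ p ∈ offPairs X, kpow (coal m) (n * T) w p ≤ (1 - δ)^n := by
  intro n
  induction n with
  | zero =>
    intro w
    have : ∀ p : X × X, kpow (coal m) 0 w p = if w = p then 1 else 0 := fun p => rfl
    calc ∑ p ∈ offPairs X, kpow (coal m) (0 * T) w p
        = ∑ p ∈ offPairs X, (if w = p then (1:ℝ) else 0) := by
          rw [Nat.zero_mul]
          exact Finset.sum_congr rfl fun p _ => this p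
      _ = (if w ∈ offPairs X then (1:ℝ) else 0) := Finset.sum_ite_eq _ _ _
      _ ≤ 1 := by split <;> norm_num
      _ = (1 - δ)^0 := by norm_num
  | succ n ih =>
    intro w
    have e : (n + 1) * T = T + n * T := by ring
    rw [e]
    have hnn : (0:ℝ) ≤ (1 - δ)^n := pow_nonneg (by linarith) n
    calc ∑ p ∈ offPairs X, kpow (coal m) (T + n * T) w p
        = ∑ p ∈ offPairs X, ∑ q : X × X, kpow (coal m) T w q * kpow (coal m) (n*T) q p := by
          exact Finset.sum_congr rfl fun p _ => kpow_add _ T (n*T) w p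
      _ = ∑ q : X × X, kpow (coal m) T w q * ∑ p ∈ offPairs X, kpow (coal m) (n*T) q p := by
          rw [Finset.sum_comm]
          exact Finset.sum_congr rfl fun q _ => by rw [← Finset.mul_sum]
      _ ≤ ∑ q : X × X, kpow (coal m) T w q * (if q.1 = q.2 then 0 else (1-δ)^n) := by
          refine Finset.sum_le_sum fun q _ => ?_
          refine mul_le_mul_of_nonneg_left ?_ (kpow_nonneg (coal_prob hm) T w q)
          rcases eq_or_ne q.1 q.2 with h | h
          · rw [if_pos h]
            have hq : q = (q.1, q.1) := by rw [Prod.ext_iff]; exact ⟨rfl, h.symm⟩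
            rw [hq, coal_diag_off]
          · rw [if_neg h]
            have hq : q = (q.1, q.2) := by rw [Prod.mk.eta]
            rw [hq]
            exact ih (q.1, q.2)
      _ = (1-δ)^n * ∑ q ∈ offPairs X, kpow (coal m) T w q := by
          rw [Finset.mul_sum, offPairs, Finset.sum_filter]
          refine Finset.sum_congr rfl fun q _ => ?_
          by_cases h : q.1 = q.2
          · simp [h]
          · simp [h, mul_comm]
      _ ≤ (1-δ)^n * (1 - δ) := by
          refine mul_le_mul_of_nonneg_left ?_ hnn
          rcases eq_or_ne w.1 w.2 with h | h
          · have hw : w = (w.1, w.1) := by rw [Prod.ext_iff]; exact ⟨rfl, h.symm⟩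
            rw [hw, coal_diag_off]
            linarith
          · have hw : w = (w.1, w.2) := by rw [Prod.mk.eta]
            rw [hw]
            calc ∑ p ∈ offPairs X, kpow (coal m) T (w.1, w.2) p
                ≤ 1 - ∑ a, kpow m T w.1 a * kpow m T w.2 a := coal_off_le hm T w.1 w.2
              _ ≤ 1 - δ := by have := hδ w.1 w.2; linarith
      _ = (1 - δ)^(n+1) := by ring

end Stmt18Aux
namespace Stmt18Aux
set_option linter.unusedSectionVars false
set_option maxHeartbeats 1000000

open Finset

variable {X : Type*} [Fintype X] [DecidableEq X]

lemma sum_prod_split (f g : X → ℝ) :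
    ∑ p : X × X, f p.1 * g p.2 = (∑ a, f a) * (∑ b, g b) := by
  rw [Fintype.sum_prod_type, Finset.sum_mul_sum]

/-- The auxiliary one-sided kernel: given the current unprimed state `x`, the current
primed state `x'`, and the new primed state `a'`, a distribution over new unprimed states. -/
noncomputable def gker (m : X → X → ℝ) (x x' a' a : X) : ℝ :=
  if x = x' then (if a = a' then 1 else 0) else m x a

lemma gker_nonneg {m : X → X → ℝ} (hm : ∀ x, IsProb (m x)) (x x' a' a : X) :
    0 ≤ gker m x x' a' a := by
  unfold gker
  split
  · split <;> norm_num
  · exact (hm x).1 a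

lemma gker_sum {m : X → X → ℝ} (hm : ∀ x, IsProb (m x)) (x x' a' : X) :
    ∑ a, gker m x x' a' a = 1 := by
  unfold gker
  rcases eq_or_ne x x' with h | h
  · simp only [if_pos h]
    rw [Finset.sum_ite_eq' Finset.univ a' (fun _ => (1:ℝ))]
    simp
  · simp only [if_neg h]
    exact (hm x).2

lemma gker_coal (m : X → X → ℝ) (x x' a' a : X) :
    gker m x x' a' a * m x' a' = coal m (x, x') (a, a') := by
  unfold gker coal
  rcases eq_or_ne x x' with h | h
  · simp only [if_pos h]
    rcases eq_or_ne a a' with h2 | h2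
    · simp [h2, h]
    · simp [h2]
  · simp only [if_neg h]

/-- the reshuffling equivalence `((x,y),(x',y')) ↦ ((x,x'),(y,y'))` -/
def shuffle (X : Type*) : ((X × X) × (X × X)) ≃ ((X × X) × (X × X)) where
  toFun s := ((s.1.1, s.2.1), (s.1.2, s.2.2))
  invFun u := ((u.1.1, u.2.1), (u.1.2, u.2.2))
  left_inv := by rintro ⟨⟨x, y⟩, ⟨x', y'⟩⟩; rfl
  right_inv := by rintro ⟨⟨x, x'⟩, ⟨y, y'⟩⟩; rfl

section Key

variable [Nonempty X] {mX mY : X → X → ℝ}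
  (hmX : ∀ x, IsProb (mX x)) (hmY : ∀ x, IsProb (mY x))
  {C : X × X → ℝ}

include hmX hmY in
/-- The key comparison inequality between entries of `C^{(k+T)}`. -/
lemma key_ineq (Tstar : ℕ) {θX θY : ℝ}
    (hOffX : ∀ x x', ∑ p ∈ offPairs X, kpow (coal mX) Tstar (x, x') p ≤ θX)
    (hOffY : ∀ y y', ∑ p ∈ offPairs X, kpow (coal mY) Tstar (y, y') p ≤ θY)
    (k : ℕ) (i j i' j' : X) {ε : ℝ} (hε : 0 < ε) :
    CmatWL mX mY C (k + Tstar) (i, j) ≤ CmatWL mX mY C (k + Tstar) (i', j')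
      + (θX + θY) * (mHigh mX mY C k - mLow mX mY C k) + (Tstar : ℝ) * ε := by
  classical
  set CM := CmatWL mX mY C with hCM
  have cmat_succ_def : ∀ (l : ℕ) (z : X × X), CM (l+1) z = dW (mX z.1) (mY z.2) (CM l) :=
    fun l z => rfl
  -- ε-optimal transition couplings for the primed pair
  have hκ : ∀ (t : ℕ) (p : X × X), ∃ κp : X × X → ℝ, IsCoupling κp (mX p.1) (mY p.2) ∧
      (t < Tstar → ∑ q : X × X, CM (k + (Tstar - 1 - t)) q * κp q
        ≤ CM (k + (Tstar - t)) p + ε) := by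
    intro t p
    by_cases ht : t < Tstar
    · obtain ⟨μ, hco, hle⟩ :=
        exists_coupling_dW_lt (hmX p.1) (hmY p.2) (CM (k + (Tstar - 1 - t))) hε
      refine ⟨μ, hco, fun _ => ?_⟩
      have he : k + (Tstar - t) = (k + (Tstar - 1 - t)) + 1 := by omega
      rw [he, cmat_succ_def]
      exact hle
    · exact ⟨fun q => mX p.1 q.1 * mY p.2 q.2, isCoupling_prod (hmX p.1) (hmY p.2),
        fun h => absurd h ht⟩
  choose κ hκc hκo using hκ
  -- the big coupled chain on ((X×X)×(X×X))
  set Q : ℕ → ((X × X) × (X × X)) → ((X × X) × (X × X)) → ℝ := fun t w v =>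
    κ t w.2 v.2 * (gker mX w.1.1 w.2.1 v.2.1 v.1.1 * gker mY w.1.2 w.2.2 v.2.2 v.1.2)
    with hQ
  set ν : ℕ → ((X × X) × (X × X)) → ℝ :=
    lawAux (fun s => if s = ((i, j), (i', j')) then 1 else 0) Q with hν
  have hν0 : ∀ s, ν 0 s = if s = ((i, j), (i', j')) then 1 else 0 := fun s => rfl
  have hνrec : ∀ t s, ν (t+1) s = ∑ w : (X × X) × (X × X), Q t w s * ν t w := fun t s => rfl
  have hQnn : ∀ t w v, 0 ≤ Q t w v := by
    intro t w v
    exact mul_nonneg ((hκc t w.2).1 v.2)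
      (mul_nonneg (gker_nonneg hmX _ _ _ _) (gker_nonneg hmY _ _ _ _))
  have hνnn : ∀ t s, 0 ≤ ν t s := by
    intro t
    induction t with
    | zero => intro s; rw [hν0]; split <;> norm_num
    | succ t ih =>
      intro s
      rw [hνrec]
      exact Finset.sum_nonneg fun w _ => mul_nonneg (hQnn t w s) (ih w)
  -- row sums of Q are 1
  have hQsum : ∀ t w, ∑ v : (X × X) × (X × X), Q t w v = 1 := by
    intro t w
    rw [Fintype.sum_prod_type]
    rw [Finset.sum_comm]
    have h1 : ∀ p' : X × X, ∑ p : X × X, Q t w (p, p') = κ t w.2 p' := by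
      intro p'
      calc ∑ p : X × X, Q t w (p, p')
          = ∑ p : X × X, κ t w.2 p' *
              (gker mX w.1.1 w.2.1 p'.1 p.1 * gker mY w.1.2 w.2.2 p'.2 p.2) := rfl
        _ = κ t w.2 p' * ∑ p : X × X,
              (gker mX w.1.1 w.2.1 p'.1 p.1 * gker mY w.1.2 w.2.2 p'.2 p.2) := by
            rw [Finset.mul_sum]
        _ = κ t w.2 p' := by
            rw [sum_prod_split, gker_sum hmX, gker_sum hmY]
            norm_num
    calc ∑ p' : X × X, ∑ p : X × X, Q t w (p, p')
        = ∑ p' : X × X, κ t w.2 p' := Finset.sum_congr rfl fun p' _ => h1 p'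
      _ = 1 := coupling_sum_one (hκc t w.2) (hmX w.2.1)
  have hνsum : ∀ t, ∑ s : (X × X) × (X × X), ν t s = 1 := by
    intro t
    induction t with
    | zero =>
      rw [Finset.sum_congr rfl fun s _ => hν0 s]
      rw [Finset.sum_ite_eq' Finset.univ ((i, j), (i', j')) (fun _ => (1:ℝ))]
      simp
    | succ t ih =>
      calc ∑ s, ν (t+1) s = ∑ s, ∑ w, Q t w s * ν t w :=
            Finset.sum_congr rfl fun s _ => hνrec t s
        _ = ∑ w, (∑ s, Q t w s) * ν t w := by
            rw [Finset.sum_comm]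
            exact Finset.sum_congr rfl fun w _ => by rw [Finset.sum_mul]
        _ = ∑ w, ν t w := Finset.sum_congr rfl fun w _ => by rw [hQsum, one_mul]
        _ = 1 := ih
  -- the unprimed-pair marginal of Q is a coupling of the one-step kernels
  have hmarg1 : ∀ t w, IsCoupling (fun p : X × X => ∑ p' : X × X, Q t w (p, p'))
      (mX w.1.1) (mY w.1.2) := by
    intro t w
    refine ⟨fun p => Finset.sum_nonneg fun p' _ => hQnn t w (p, p'), ?_, ?_⟩
    · intro a
      show ∑ b, ∑ p' : X × X, Q t w ((a, b), p') = mX w.1.1 a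
      rw [Finset.sum_comm]
      have h1 : ∀ p' : X × X, ∑ b, Q t w ((a, b), p')
          = gker mX w.1.1 w.2.1 p'.1 a * κ t w.2 p' := by
        intro p'
        calc ∑ b, Q t w ((a, b), p')
            = (κ t w.2 p' * gker mX w.1.1 w.2.1 p'.1 a) *
                ∑ b, gker mY w.1.2 w.2.2 p'.2 b := by
              rw [Finset.mul_sum]
              exact Finset.sum_congr rfl fun b _ => by show Q t w ((a,b),p') = _; rw [hQ]; ring
          _ = gker mX w.1.1 w.2.1 p'.1 a * κ t w.2 p' := by
              rw [gker_sum hmY]; ring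
      rw [Finset.sum_congr rfl fun p' _ => h1 p']
      rw [Fintype.sum_prod_type]
      have h2 : ∀ a' : X, ∑ b' : X, gker mX w.1.1 w.2.1 a' a * κ t w.2 (a', b')
          = gker mX w.1.1 w.2.1 a' a * mX w.2.1 a' := by
        intro a'
        rw [← Finset.mul_sum, (hκc t w.2).2.1 a']
      rw [Finset.sum_congr rfl fun a' _ => h2 a']
      calc ∑ a', gker mX w.1.1 w.2.1 a' a * mX w.2.1 a'
          = ∑ a', coal mX (w.1.1, w.2.1) (a, a') := by
            exact Finset.sum_congr rfl fun a' _ => gker_coal mX _ _ _ _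
        _ = mX w.1.1 a := by
          -- sum over a' of coal at (a, a')
          unfold coal
          rcases eq_or_ne w.1.1 w.2.1 with h | h
          · simp only [if_pos h]
            rw [Finset.sum_ite_eq Finset.univ a (fun a' => mX w.1.1 a)]
            simp [h]
          · simp only [if_neg h]
            rw [← Finset.mul_sum, (hmX w.2.1).2, mul_one]
    · intro b
      show ∑ a, ∑ p' : X × X, Q t w ((a, b), p') = mY w.1.2 b
      rw [Finset.sum_comm]
      have h1 : ∀ p' : X × X, ∑ a, Q t w ((a, b), p')
          = gker mY w.1.2 w.2.2 p'.2 b * κ t w.2 p' := by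
        intro p'
        calc ∑ a, Q t w ((a, b), p')
            = (κ t w.2 p' * gker mY w.1.2 w.2.2 p'.2 b) *
                ∑ a, gker mX w.1.1 w.2.1 p'.1 a := by
              rw [Finset.mul_sum]
              exact Finset.sum_congr rfl fun a _ => by show Q t w ((a,b),p') = _; rw [hQ]; ring
          _ = gker mY w.1.2 w.2.2 p'.2 b * κ t w.2 p' := by
              rw [gker_sum hmX]; ring
      rw [Finset.sum_congr rfl fun p' _ => h1 p']
      rw [Fintype.sum_prod_type]
      have h2 : ∀ a' : X, ∑ b' : X, gker mY w.1.2 w.2.2 b' b * κ t w.2 (a', b')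
          = ∑ b' : X, gker mY w.1.2 w.2.2 b' b * κ t w.2 (a', b') := fun _ => rfl
      rw [Finset.sum_comm]
      have h3 : ∀ b' : X, ∑ a' : X, gker mY w.1.2 w.2.2 b' b * κ t w.2 (a', b')
          = gker mY w.1.2 w.2.2 b' b * mY w.2.2 b' := by
        intro b'
        rw [← Finset.mul_sum, (hκc t w.2).2.2 b']
      rw [Finset.sum_congr rfl fun b' _ => h3 b']
      calc ∑ b', gker mY w.1.2 w.2.2 b' b * mY w.2.2 b'
          = ∑ b', coal mY (w.1.2, w.2.2) (b, b') := by
            exact Finset.sum_congr rfl fun b' _ => gker_coal mY _ _ _ _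
        _ = mY w.1.2 b := by
          unfold coal
          rcases eq_or_ne w.1.2 w.2.2 with h | h
          · simp only [if_pos h]
            rw [Finset.sum_ite_eq Finset.univ b (fun b' => mY w.1.2 b)]
            simp [h]
          · simp only [if_neg h]
            rw [← Finset.mul_sum, (hmY w.2.2).2, mul_one]
  -- the fiber sums of Q over the unprimed coordinate
  have hQfiber : ∀ t w (p' : X × X), ∑ p : X × X, Q t w (p, p') = κ t w.2 p' := by
    intro t w p'
    calc ∑ p : X × X, Q t w (p, p')
        = κ t w.2 p' * ∑ p : X × X,
            (gker mX w.1.1 w.2.1 p'.1 p.1 * gker mY w.1.2 w.2.2 p'.2 p.2) := by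
          rw [Finset.mul_sum]
      _ = κ t w.2 p' := by
          rw [sum_prod_split, gker_sum hmX, gker_sum hmY]
          norm_num
  -- the A-chain: dynamic programming lower bound along the unprimed pair
  have hA : ∀ t, t ≤ Tstar →
      CM (k + Tstar) (i, j) ≤ ∑ s, ν t s * CM (k + (Tstar - t)) s.1 := by
    intro t
    induction t with
    | zero =>
      intro _
      have : ∑ s, ν 0 s * CM (k + (Tstar - 0)) s.1 = CM (k + Tstar) (i, j) := by
        rw [Nat.sub_zero]
        calc ∑ s, ν 0 s * CM (k + Tstar) s.1
            = ∑ s, (if s = ((i, j), (i', j')) then CM (k + Tstar) s.1 else 0) := by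
              refine Finset.sum_congr rfl fun s _ => ?_
              rw [hν0]
              split <;> simp
          _ = CM (k + Tstar) (i, j) := by
              rw [Finset.sum_ite_eq' Finset.univ ((i, j), (i', j'))
                (fun s : (X × X) × (X × X) => CM (k + Tstar) s.1)]
              simp
      rw [this]
    | succ t ih =>
      intro ht
      have htlt : t < Tstar := by omega
      have ih' := ih (by omega)
      have key_w : ∀ w, CM (k + (Tstar - t)) w.1
          ≤ ∑ v, Q t w v * CM (k + (Tstar - (t+1))) v.1 := by
        intro w
        have he : k + (Tstar - t) = (k + (Tstar - (t+1))) + 1 := by omega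
        rw [he, cmat_succ_def]
        refine le_trans (dW_le_coupling (hmX w.1.1) (hmarg1 t w)) (le_of_eq ?_)
        calc ∑ z : X × X, CM (k + (Tstar - (t+1))) z * (∑ p' : X × X, Q t w (z, p'))
            = ∑ z : X × X, ∑ p' : X × X, Q t w (z, p') * CM (k + (Tstar - (t+1))) z := by
              refine Finset.sum_congr rfl fun z _ => ?_
              rw [Finset.mul_sum]
              exact Finset.sum_congr rfl fun p' _ => by ring
          _ = ∑ v, Q t w v * CM (k + (Tstar - (t+1))) v.1 :=
            (Fintype.sum_prod_type
              (fun v : (X × X) × (X × X) => Q t w v * CM (k + (Tstar - (t+1))) v.1)).symm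
      calc CM (k + Tstar) (i, j) ≤ ∑ w, ν t w * CM (k + (Tstar - t)) w.1 := ih'
        _ ≤ ∑ w, ν t w * (∑ v, Q t w v * CM (k + (Tstar - (t+1))) v.1) := by
            refine Finset.sum_le_sum fun w _ => ?_
            exact mul_le_mul_of_nonneg_left (key_w w) (hνnn t w)
        _ = ∑ v, (∑ w, Q t w v * ν t w) * CM (k + (Tstar - (t+1))) v.1 := by
            calc ∑ w, ν t w * (∑ v, Q t w v * CM (k + (Tstar - (t+1))) v.1)
                = ∑ w, ∑ v, (Q t w v * ν t w) * CM (k + (Tstar - (t+1))) v.1 := by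
                  refine Finset.sum_congr rfl fun w _ => ?_
                  rw [Finset.mul_sum]
                  exact Finset.sum_congr rfl fun v _ => by ring
              _ = ∑ v, ∑ w, (Q t w v * ν t w) * CM (k + (Tstar - (t+1))) v.1 :=
                  Finset.sum_comm
              _ = _ := Finset.sum_congr rfl fun v _ => by rw [Finset.sum_mul]
        _ = ∑ v, ν (t+1) v * CM (k + (Tstar - (t+1))) v.1 :=
            Finset.sum_congr rfl fun v _ => by rw [hνrec]
  -- the B-chain: near-optimal evolution of the primed pair
  have hB : ∀ t, t ≤ Tstar →
      ∑ s, ν t s * CM (k + (Tstar - t)) s.2 ≤ CM (k + Tstar) (i', j') + (t : ℝ) * ε := by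
    intro t
    induction t with
    | zero =>
      intro _
      have : ∑ s, ν 0 s * CM (k + (Tstar - 0)) s.2 = CM (k + Tstar) (i', j') := by
        rw [Nat.sub_zero]
        calc ∑ s, ν 0 s * CM (k + Tstar) s.2
            = ∑ s, (if s = ((i, j), (i', j')) then CM (k + Tstar) s.2 else 0) := by
              refine Finset.sum_congr rfl fun s _ => ?_
              rw [hν0]
              split <;> simp
          _ = CM (k + Tstar) (i', j') := by
              rw [Finset.sum_ite_eq' Finset.univ ((i, j), (i', j'))
                (fun s : (X × X) × (X × X) => CM (k + Tstar) s.2)]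
              simp
      rw [this]
      simp
    | succ t ih =>
      intro ht
      have htlt : t < Tstar := by omega
      have ih' := ih (by omega)
      have key_w : ∀ w, ∑ v, Q t w v * CM (k + (Tstar - (t+1))) v.2
          ≤ CM (k + (Tstar - t)) w.2 + ε := by
        intro w
        have he : k + (Tstar - 1 - t) = k + (Tstar - (t+1)) := by omega
        have hopt := hκo t w.2 htlt
        rw [he] at hopt
        refine le_trans (le_of_eq ?_) hopt
        calc ∑ v, Q t w v * CM (k + (Tstar - (t+1))) v.2
            = ∑ p : X × X, ∑ p' : X × X, Q t w (p, p') * CM (k + (Tstar - (t+1))) p' := by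
              rw [Fintype.sum_prod_type]
          _ = ∑ p' : X × X, (∑ p : X × X, Q t w (p, p')) * CM (k + (Tstar - (t+1))) p' := by
              rw [Finset.sum_comm]
              exact Finset.sum_congr rfl fun p' _ => by rw [Finset.sum_mul]
          _ = ∑ q : X × X, CM (k + (Tstar - (t+1))) q * κ t w.2 q := by
              refine Finset.sum_congr rfl fun q _ => ?_
              rw [hQfiber]
              ring
      calc ∑ s, ν (t+1) s * CM (k + (Tstar - (t+1))) s.2
          = ∑ w, ν t w * (∑ v, Q t w v * CM (k + (Tstar - (t+1))) v.2) := by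
            calc ∑ s, ν (t+1) s * CM (k + (Tstar - (t+1))) s.2
                = ∑ v, ∑ w, (Q t w v * ν t w) * CM (k + (Tstar - (t+1))) v.2 := by
                  refine Finset.sum_congr rfl fun v _ => ?_
                  rw [hνrec, Finset.sum_mul]
              _ = ∑ w, ∑ v, (Q t w v * ν t w) * CM (k + (Tstar - (t+1))) v.2 :=
                  Finset.sum_comm
              _ = _ := by
                  refine Finset.sum_congr rfl fun w _ => ?_
                  rw [Finset.mul_sum]
                  exact Finset.sum_congr rfl fun v _ => by ring
        _ ≤ ∑ w, ν t w * (CM (k + (Tstar - t)) w.2 + ε) := by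
            refine Finset.sum_le_sum fun w _ => ?_
            exact mul_le_mul_of_nonneg_left (key_w w) (hνnn t w)
        _ = (∑ w, ν t w * CM (k + (Tstar - t)) w.2) + ε := by
            have h1 : ∀ w : (X × X) × (X × X), ν t w * (CM (k + (Tstar - t)) w.2 + ε)
                = ν t w * CM (k + (Tstar - t)) w.2 + ν t w * ε := fun w => by ring
            rw [Finset.sum_congr rfl fun w _ => h1 w, Finset.sum_add_distrib,
              ← Finset.sum_mul, hνsum, one_mul]
        _ ≤ CM (k + Tstar) (i', j') + (t : ℝ) * ε + ε := by linarith
        _ = CM (k + Tstar) (i', j') + ((t+1 : ℕ) : ℝ) * ε := by push_cast; ring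
  -- the (X, X') pair marginal
  set e := shuffle X with he
  set χX : ℕ → (X × X) → ℝ := fun t p => ∑ q : X × X, ν t (e.symm (p, q)) with hχX
  have hχXrec : ∀ t p, χX (t+1) p = ∑ w, coal mX w p * χX t w := by
    intro t p
    have hinner : ∀ s, ∑ q : X × X, Q t s (e.symm (p, q)) = coal mX (s.1.1, s.2.1) p := by
      intro s
      have hq : ∀ q : X × X, Q t s (e.symm (p, q))
          = (gker mX s.1.1 s.2.1 p.2 p.1) * (κ t s.2 (p.2, q.2) * gker mY s.1.2 s.2.2 q.2 q.1) := by
        intro q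
        show κ t s.2 (p.2, q.2) * (gker mX s.1.1 s.2.1 p.2 p.1 * gker mY s.1.2 s.2.2 q.2 q.1) = _
        ring
      calc ∑ q : X × X, Q t s (e.symm (p, q))
          = (gker mX s.1.1 s.2.1 p.2 p.1) *
              ∑ q : X × X, (κ t s.2 (p.2, q.2) * gker mY s.1.2 s.2.2 q.2 q.1) := by
            rw [Finset.mul_sum]
            exact Finset.sum_congr rfl fun q _ => hq q
        _ = (gker mX s.1.1 s.2.1 p.2 p.1) * mX s.2.1 p.2 := by
            congr 1
            rw [Fintype.sum_prod_type, Finset.sum_comm]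
            calc ∑ b' : X, ∑ b : X, κ t s.2 (p.2, b') * gker mY s.1.2 s.2.2 b' b
                = ∑ b' : X, κ t s.2 (p.2, b') := by
                  refine Finset.sum_congr rfl fun b' _ => ?_
                  rw [← Finset.mul_sum, gker_sum hmY, mul_one]
              _ = mX s.2.1 p.2 := (hκc t s.2).2.1 p.2
        _ = coal mX (s.1.1, s.2.1) p := by
            rw [← Prod.mk.eta (p := p), gker_coal]
    calc χX (t+1) p = ∑ q : X × X, ∑ s, Q t s (e.symm (p, q)) * ν t s := rfl
      _ = ∑ s, ∑ q : X × X, Q t s (e.symm (p, q)) * ν t s := Finset.sum_comm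
      _ = ∑ s, ν t s * coal mX (s.1.1, s.2.1) p := by
          refine Finset.sum_congr rfl fun s _ => ?_
          rw [← Finset.sum_mul, hinner]
          ring
      _ = ∑ u : (X × X) × (X × X), coal mX u.1 p * ν t (e.symm u) := by
          refine Fintype.sum_equiv e _ _ fun s => ?_
          show ν t s * coal mX (s.1.1, s.2.1) p = coal mX (e s).1 p * ν t (e.symm (e s))
          rw [Equiv.symm_apply_apply]
          show ν t s * coal mX (s.1.1, s.2.1) p = coal mX (s.1.1, s.2.1) p * ν t s
          ring
      _ = ∑ w, coal mX w p * χX t w := by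
          rw [Fintype.sum_prod_type]
          exact Finset.sum_congr rfl fun w _ => by rw [Finset.mul_sum]
  have hχX0 : ∀ p, χX 0 p = if p = (i, i') then 1 else 0 := by
    intro p
    have hterm : ∀ q : X × X, ν 0 (e.symm (p, q))
        = (if p = (i, i') then (1:ℝ) else 0) * (if q = (j, j') then (1:ℝ) else 0) := by
      intro q
      rw [hν0]
      have hcond : (e.symm (p, q) = ((i, j), (i', j'))) ↔ ((p, q) = ((i, i'), (j, j'))) := by
        rw [Equiv.symm_apply_eq]
        exact Iff.rfl
      by_cases hp : p = (i, i') <;> by_cases hq : q = (j, j')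
      · subst hp; subst hq
        rw [if_pos (hcond.mpr rfl)]
        simp
      · rw [if_neg (fun hcc => hq (congrArg Prod.snd (hcond.mp hcc)))]
        simp [hq]
      · rw [if_neg (fun hcc => hp (congrArg Prod.fst (hcond.mp hcc)))]
        simp [hp]
      · rw [if_neg (fun hcc => hp (congrArg Prod.fst (hcond.mp hcc)))]
        simp [hp]
    calc χX 0 p = ∑ q : X × X, ((if p = (i, i') then (1:ℝ) else 0) *
          (if q = (j, j') then (1:ℝ) else 0)) :=
          Finset.sum_congr rfl fun q _ => hterm q
      _ = (if p = (i, i') then (1:ℝ) else 0) *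
          ∑ q : X × X, (if q = (j, j') then (1:ℝ) else 0) := by rw [Finset.mul_sum]
      _ = (if p = (i, i') then 1 else 0) := by
          rw [Finset.sum_ite_eq' Finset.univ ((j, j') : X × X) (fun _ => (1:ℝ))]
          simp
  have hχXT : ∀ p, χX Tstar p = kpow (coal mX) Tstar (i, i') p := by
    intro p
    have := evol_kpow (coal mX) χX hχXrec 0 Tstar p
    rw [Nat.zero_add] at this
    rw [this]
    calc ∑ w, kpow (coal mX) Tstar w p * χX 0 w
        = ∑ w, (if w = (i, i') then kpow (coal mX) Tstar w p else 0) := by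
          refine Finset.sum_congr rfl fun w _ => ?_
          rw [hχX0]
          split <;> simp
      _ = kpow (coal mX) Tstar (i, i') p := by
          rw [Finset.sum_ite_eq' Finset.univ ((i, i') : X × X)
            (fun w => kpow (coal mX) Tstar w p)]
          simp
  -- the (Y, Y') pair marginal
  set χY : ℕ → (X × X) → ℝ := fun t p => ∑ q : X × X, ν t (e.symm (q, p)) with hχY
  have hχYrec : ∀ t p, χY (t+1) p = ∑ w, coal mY w p * χY t w := by
    intro t p
    have hinner : ∀ s, ∑ q : X × X, Q t s (e.symm (q, p)) = coal mY (s.1.2, s.2.2) p := by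
      intro s
      have hq : ∀ q : X × X, Q t s (e.symm (q, p))
          = (gker mY s.1.2 s.2.2 p.2 p.1) *
            (κ t s.2 (q.2, p.2) * gker mX s.1.1 s.2.1 q.2 q.1) := by
        intro q
        show κ t s.2 (q.2, p.2) *
          (gker mX s.1.1 s.2.1 q.2 q.1 * gker mY s.1.2 s.2.2 p.2 p.1) = _
        ring
      calc ∑ q : X × X, Q t s (e.symm (q, p))
          = (gker mY s.1.2 s.2.2 p.2 p.1) *
              ∑ q : X × X, (κ t s.2 (q.2, p.2) * gker mX s.1.1 s.2.1 q.2 q.1) := by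
            rw [Finset.mul_sum]
            exact Finset.sum_congr rfl fun q _ => hq q
        _ = (gker mY s.1.2 s.2.2 p.2 p.1) * mY s.2.2 p.2 := by
            congr 1
            rw [Fintype.sum_prod_type, Finset.sum_comm]
            calc ∑ a' : X, ∑ a : X, κ t s.2 (a', p.2) * gker mX s.1.1 s.2.1 a' a
                = ∑ a' : X, κ t s.2 (a', p.2) := by
                  refine Finset.sum_congr rfl fun a' _ => ?_
                  rw [← Finset.mul_sum, gker_sum hmX, mul_one]
              _ = mY s.2.2 p.2 := (hκc t s.2).2.2 p.2
        _ = coal mY (s.1.2, s.2.2) p := by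
            rw [← Prod.mk.eta (p := p), gker_coal]
    calc χY (t+1) p = ∑ q : X × X, ∑ s, Q t s (e.symm (q, p)) * ν t s := rfl
      _ = ∑ s, ∑ q : X × X, Q t s (e.symm (q, p)) * ν t s := Finset.sum_comm
      _ = ∑ s, ν t s * coal mY (s.1.2, s.2.2) p := by
          refine Finset.sum_congr rfl fun s _ => ?_
          rw [← Finset.sum_mul, hinner]
          ring
      _ = ∑ u : (X × X) × (X × X), coal mY u.2 p * ν t (e.symm u) := by
          refine Fintype.sum_equiv e _ _ fun s => ?_
          show ν t s * coal mY (s.1.2, s.2.2) p = coal mY (e s).2 p * ν t (e.symm (e s))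
          rw [Equiv.symm_apply_apply]
          show ν t s * coal mY (s.1.2, s.2.2) p = coal mY (s.1.2, s.2.2) p * ν t s
          ring
      _ = ∑ w, coal mY w p * χY t w := by
          rw [Fintype.sum_prod_type, Finset.sum_comm]
          exact Finset.sum_congr rfl fun w _ => by rw [Finset.mul_sum]
  have hχY0 : ∀ p, χY 0 p = if p = (j, j') then 1 else 0 := by
    intro p
    have hterm : ∀ q : X × X, ν 0 (e.symm (q, p))
        = (if p = (j, j') then (1:ℝ) else 0) * (if q = (i, i') then (1:ℝ) else 0) := by
      intro q
      rw [hν0]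
      have hcond : (e.symm (q, p) = ((i, j), (i', j'))) ↔ ((q, p) = ((i, i'), (j, j'))) := by
        rw [Equiv.symm_apply_eq]
        exact Iff.rfl
      by_cases hp : p = (j, j') <;> by_cases hq : q = (i, i')
      · subst hp; subst hq
        rw [if_pos (hcond.mpr rfl)]
        simp
      · rw [if_neg (fun hcc => hq (congrArg Prod.fst (hcond.mp hcc)))]
        simp [hq]
      · rw [if_neg (fun hcc => hp (congrArg Prod.snd (hcond.mp hcc)))]
        simp [hp]
      · rw [if_neg (fun hcc => hp (congrArg Prod.snd (hcond.mp hcc)))]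
        simp [hp]
    calc χY 0 p = ∑ q : X × X, ((if p = (j, j') then (1:ℝ) else 0) *
          (if q = (i, i') then (1:ℝ) else 0)) :=
          Finset.sum_congr rfl fun q _ => hterm q
      _ = (if p = (j, j') then (1:ℝ) else 0) *
          ∑ q : X × X, (if q = (i, i') then (1:ℝ) else 0) := by rw [Finset.mul_sum]
      _ = (if p = (j, j') then 1 else 0) := by
          rw [Finset.sum_ite_eq' Finset.univ ((i, i') : X × X) (fun _ => (1:ℝ))]
          simp
  have hχYT : ∀ p, χY Tstar p = kpow (coal mY) Tstar (j, j') p := by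
    intro p
    have := evol_kpow (coal mY) χY hχYrec 0 Tstar p
    rw [Nat.zero_add] at this
    rw [this]
    calc ∑ w, kpow (coal mY) Tstar w p * χY 0 w
        = ∑ w, (if w = (j, j') then kpow (coal mY) Tstar w p else 0) := by
          refine Finset.sum_congr rfl fun w _ => ?_
          rw [hχY0]
          split <;> simp
      _ = kpow (coal mY) Tstar (j, j') p := by
          rw [Finset.sum_ite_eq' Finset.univ ((j, j') : X × X)
            (fun w => kpow (coal mY) Tstar w p)]
          simp
  -- bad set bound
  set BadX : Finset ((X × X) × (X × X)) := Finset.univ.filter (fun s => s.1.1 ≠ s.2.1) with hBadX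
  set BadY : Finset ((X × X) × (X × X)) := Finset.univ.filter (fun s => s.1.2 ≠ s.2.2) with hBadY
  set Bad : Finset ((X × X) × (X × X)) := Finset.univ.filter (fun s => s.1 ≠ s.2) with hBad
  have hBXsum : ∑ s ∈ BadX, ν Tstar s = ∑ p ∈ offPairs X, χX Tstar p := by
    rw [hBadX, offPairs, Finset.sum_filter, Finset.sum_filter]
    have h1 : ∑ s : (X × X) × (X × X), (if s.1.1 ≠ s.2.1 then ν Tstar s else 0)
        = ∑ u : (X × X) × (X × X), (if u.1.1 ≠ u.1.2 then ν Tstar (e.symm u) else 0) := by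
      refine Fintype.sum_equiv e _ _ fun s => ?_
      show (if s.1.1 ≠ s.2.1 then ν Tstar s else 0)
        = (if (e s).1.1 ≠ (e s).1.2 then ν Tstar (e.symm (e s)) else 0)
      rw [Equiv.symm_apply_apply]
      rfl
    rw [h1, Fintype.sum_prod_type]
    refine Finset.sum_congr rfl fun w _ => ?_
    by_cases hw : w.1 ≠ w.2
    · simp only [if_pos hw]; rfl
    · simp only [if_neg hw, Finset.sum_const_zero]
  have hBYsum : ∑ s ∈ BadY, ν Tstar s = ∑ p ∈ offPairs X, χY Tstar p := by
    rw [hBadY, offPairs, Finset.sum_filter, Finset.sum_filter]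
    have h1 : ∑ s : (X × X) × (X × X), (if s.1.2 ≠ s.2.2 then ν Tstar s else 0)
        = ∑ u : (X × X) × (X × X), (if u.2.1 ≠ u.2.2 then ν Tstar (e.symm u) else 0) := by
      refine Fintype.sum_equiv e _ _ fun s => ?_
      show (if s.1.2 ≠ s.2.2 then ν Tstar s else 0)
        = (if (e s).2.1 ≠ (e s).2.2 then ν Tstar (e.symm (e s)) else 0)
      rw [Equiv.symm_apply_apply]
      rfl
    rw [h1, Fintype.sum_prod_type, Finset.sum_comm]
    refine Finset.sum_congr rfl fun q _ => ?_
    by_cases hq : q.1 ≠ q.2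
    · simp only [if_pos hq]; rfl
    · simp only [if_neg hq, Finset.sum_const_zero]
  have hbadsum : ∑ s ∈ Bad, ν Tstar s ≤ θX + θY := by
    have hsub : Bad ⊆ BadX ∪ BadY := by
      intro s hs
      rw [hBad, Finset.mem_filter] at hs
      rcases eq_or_ne s.1.1 s.2.1 with hx | hx
      · rcases eq_or_ne s.1.2 s.2.2 with hy | hy
        · exact absurd (Prod.ext hx hy) hs.2
        · refine Finset.mem_union_right _ ?_
          rw [hBadY, Finset.mem_filter]
          exact ⟨Finset.mem_univ s, hy⟩
      · refine Finset.mem_union_left _ ?_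
        rw [hBadX, Finset.mem_filter]
        exact ⟨Finset.mem_univ s, hx⟩
    have h1 : ∑ s ∈ Bad, ν Tstar s ≤ ∑ s ∈ BadX ∪ BadY, ν Tstar s :=
      Finset.sum_le_sum_of_subset_of_nonneg hsub (fun s _ _ => hνnn Tstar s)
    have h2 := Finset.sum_union_inter (s₁ := BadX) (s₂ := BadY) (f := ν Tstar)
    have h3 : 0 ≤ ∑ s ∈ BadX ∩ BadY, ν Tstar s :=
      Finset.sum_nonneg fun s _ => hνnn Tstar s
    have h4 : ∑ s ∈ BadX, ν Tstar s ≤ θX := by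
      rw [hBXsum]
      calc ∑ p ∈ offPairs X, χX Tstar p
          = ∑ p ∈ offPairs X, kpow (coal mX) Tstar (i, i') p :=
            Finset.sum_congr rfl fun p _ => hχXT p
        _ ≤ θX := hOffX i i'
    have h5 : ∑ s ∈ BadY, ν Tstar s ≤ θY := by
      rw [hBYsum]
      calc ∑ p ∈ offPairs X, χY Tstar p
          = ∑ p ∈ offPairs X, kpow (coal mY) Tstar (j, j') p :=
            Finset.sum_congr rfl fun p _ => hχYT p
        _ ≤ θY := hOffY j j'
    linarith
  -- final assembly
  have hΔ0 : 0 ≤ mHigh mX mY C k - mLow mX mY C k := by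
    have := mLow_le_mHigh (mX := mX) (mY := mY) (C := C) k
    linarith
  have h1 := hA Tstar le_rfl
  have h2 := hB Tstar le_rfl
  rw [Nat.sub_self, Nat.add_zero] at h1 h2
  have hpw : ∀ s : (X × X) × (X × X), ν Tstar s * CM k s.1 - ν Tstar s * CM k s.2
      ≤ (if s.1 ≠ s.2 then ν Tstar s * (mHigh mX mY C k - mLow mX mY C k) else 0) := by
    intro s
    by_cases hs : s.1 ≠ s.2
    · rw [if_pos hs]
      have hu : CM k s.1 ≤ mHigh mX mY C k := le_mHigh k s.1
      have hl : mLow mX mY C k ≤ CM k s.2 := mLow_le k s.2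
      have hd : CM k s.1 - CM k s.2 ≤ mHigh mX mY C k - mLow mX mY C k := by linarith
      calc ν Tstar s * CM k s.1 - ν Tstar s * CM k s.2
          = ν Tstar s * (CM k s.1 - CM k s.2) := by ring
        _ ≤ ν Tstar s * (mHigh mX mY C k - mLow mX mY C k) :=
            mul_le_mul_of_nonneg_left hd (hνnn Tstar s)
    · rw [if_neg hs]
      have hss : s.1 = s.2 := not_ne_iff.mp hs
      rw [hss]
      simp
  have hmid : ∑ s, ν Tstar s * CM k s.1
      ≤ (∑ s, ν Tstar s * CM k s.2) + (θX + θY) * (mHigh mX mY C k - mLow mX mY C k) := by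
    have hsd : ∑ s, (ν Tstar s * CM k s.1 - ν Tstar s * CM k s.2)
        ≤ ∑ s : (X × X) × (X × X),
            (if s.1 ≠ s.2 then ν Tstar s * (mHigh mX mY C k - mLow mX mY C k) else 0) :=
      Finset.sum_le_sum fun s _ => hpw s
    rw [Finset.sum_sub_distrib] at hsd
    have hsb : ∑ s : (X × X) × (X × X),
        (if s.1 ≠ s.2 then ν Tstar s * (mHigh mX mY C k - mLow mX mY C k) else 0)
        = (∑ s ∈ Bad, ν Tstar s) * (mHigh mX mY C k - mLow mX mY C k) := by
      rw [hBad, Finset.sum_filter, Finset.sum_mul]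
      refine Finset.sum_congr rfl fun s _ => ?_
      split <;> simp
    have hsc : (∑ s ∈ Bad, ν Tstar s) * (mHigh mX mY C k - mLow mX mY C k)
        ≤ (θX + θY) * (mHigh mX mY C k - mLow mX mY C k) :=
      mul_le_mul_of_nonneg_right hbadsum hΔ0
    rw [hsb] at hsd
    linarith
  linarith

end Key

end Stmt18Aux
namespace Stmt18Aux
set_option linter.unusedSectionVars false

open Finset

variable {X : Type*} [Fintype X] [DecidableEq X]

lemma real_le_of_forall_pos_le_add {a b : ℝ} (h : ∀ ε : ℝ, 0 < ε → a ≤ b + ε) : a ≤ b := by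
  by_contra hc
  push_neg at hc
  have := h ((a - b)/2) (by linarith)
  linarith

lemma contraction [Nonempty X] {mX mY : X → X → ℝ}
    (hmX : ∀ x, IsProb (mX x)) (hmY : ∀ x, IsProb (mY x))
    (hirrX : KernelIrreducible mX) (haperX : KernelAperiodic mX)
    (hirrY : KernelIrreducible mY) (haperY : KernelAperiodic mY)
    (C : X × X → ℝ) :
    ∃ Tstar, 1 ≤ Tstar ∧ ∀ k, mHigh mX mY C (k + Tstar) - mLow mX mY C (k + Tstar)
      ≤ (mHigh mX mY C k - mLow mX mY C k) / 2 := by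
  classical
  obtain ⟨TX, hTX1, hTXpos⟩ := exists_primitive hmX hirrX haperX
  obtain ⟨TY, hTY1, hTYpos⟩ := exists_primitive hmY hirrY haperY
  set T := max TX TY with hT
  have hT1 : 1 ≤ T := le_trans hTX1 (le_max_left _ _)
  have hTXpos' : ∀ x x', 0 < kpow mX T x x' := allpos_mono hmX (le_max_left _ _) hTXpos
  have hTYpos' : ∀ x x', 0 < kpow mY T x x' := allpos_mono hmY (le_max_right _ _) hTYpos
  set δX : ℝ := Finset.univ.inf' Finset.univ_nonempty
    (fun p : X × X => ∑ a, kpow mX T p.1 a * kpow mX T p.2 a) with hδX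
  set δY : ℝ := Finset.univ.inf' Finset.univ_nonempty
    (fun p : X × X => ∑ a, kpow mY T p.1 a * kpow mY T p.2 a) with hδY
  have hδXpos : 0 < δX := by
    rw [hδX, Finset.lt_inf'_iff]
    intro p _
    exact Finset.sum_pos (fun a _ => mul_pos (hTXpos' p.1 a) (hTXpos' p.2 a))
      Finset.univ_nonempty
  have hδYpos : 0 < δY := by
    rw [hδY, Finset.lt_inf'_iff]
    intro p _
    exact Finset.sum_pos (fun a _ => mul_pos (hTYpos' p.1 a) (hTYpos' p.2 a))
      Finset.univ_nonempty
  have hδX1 : δX ≤ 1 := by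
    refine le_trans (Finset.inf'_le _ (Finset.mem_univ (Classical.arbitrary (X × X)))) ?_
    exact sum_prod_le_one (kpow_prob hmX T _) (kpow_prob hmX T _)
  have hδY1 : δY ≤ 1 := by
    refine le_trans (Finset.inf'_le _ (Finset.mem_univ (Classical.arbitrary (X × X)))) ?_
    exact sum_prod_le_one (kpow_prob hmY T _) (kpow_prob hmY T _)
  have hδXle : ∀ x x', δX ≤ ∑ a, kpow mX T x a * kpow mX T x' a := fun x x' =>
    Finset.inf'_le _ (Finset.mem_univ ((x, x') : X × X))
  have hδYle : ∀ y y', δY ≤ ∑ a, kpow mY T y a * kpow mY T y' a := fun y y' =>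
    Finset.inf'_le _ (Finset.mem_univ ((y, y') : X × X))
  set δ := min δX δY with hδ
  have hδpos : 0 < δ := lt_min hδXpos hδYpos
  have hδ1 : δ ≤ 1 := le_trans (min_le_left _ _) hδX1
  obtain ⟨n, hn⟩ := exists_pow_lt_of_lt_one (show (0:ℝ) < 1/4 by norm_num)
    (show 1 - δ < 1 by linarith)
  set N := n + 1 with hN
  have h1δ : (0:ℝ) ≤ 1 - δ := by linarith
  have hN4 : (1 - δ)^N ≤ 1/4 := by
    calc (1 - δ)^N = (1 - δ)^n * (1 - δ) := by rw [pow_succ]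
      _ ≤ (1 - δ)^n * 1 := mul_le_mul_of_nonneg_left (by linarith) (pow_nonneg h1δ n)
      _ ≤ 1/4 := by rw [mul_one]; exact le_of_lt hn
  set θX : ℝ := (1 - δX)^N with hθX
  set θY : ℝ := (1 - δY)^N with hθY
  have hθXle : θX ≤ (1 - δ)^N :=
    pow_le_pow_left₀ (by linarith) (by have : δ ≤ δX := min_le_left _ _; linarith) N
  have hθYle : θY ≤ (1 - δ)^N :=
    pow_le_pow_left₀ (by linarith) (by have : δ ≤ δY := min_le_right _ _; linarith) N
  have hθsum : θX + θY ≤ 1/2 := by linarith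
  refine ⟨N * T, Nat.mul_pos (by omega) (by omega), fun k => ?_⟩
  set Tstar := N * T with hTstar
  have hTstar1 : 1 ≤ Tstar := Nat.mul_pos (by omega) (by omega)
  have hOffX : ∀ x x', ∑ p ∈ offPairs X, kpow (coal mX) Tstar (x, x') p ≤ θX :=
    fun x x' => coal_off_pow hmX hδX1 hδXle N (x, x')
  have hOffY : ∀ y y', ∑ p ∈ offPairs X, kpow (coal mY) Tstar (y, y') p ≤ θY :=
    fun y y' => coal_off_pow hmY hδY1 hδYle N (y, y')
  have hΔ0 : 0 ≤ mHigh mX mY C k - mLow mX mY C k := by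
    have := mLow_le_mHigh (mX := mX) (mY := mY) (C := C) k
    linarith
  -- for every ε > 0 the contraction holds up to Tstar * ε
  have hmain : ∀ ε : ℝ, 0 < ε →
      mHigh mX mY C (k + Tstar) - mLow mX mY C (k + Tstar)
        ≤ (mHigh mX mY C k - mLow mX mY C k) / 2 + ε := by
    intro ε hε
    have hε' : 0 < ε / (Tstar : ℝ) := by
      apply div_pos hε
      exact_mod_cast hTstar1
    have hkey : ∀ z z' : X × X, CmatWL mX mY C (k + Tstar) z
        ≤ CmatWL mX mY C (k + Tstar) z'
          + (mHigh mX mY C k - mLow mX mY C k) / 2 + ε := by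
      intro z z'
      have h := key_ineq hmX hmY (C := C) Tstar hOffX hOffY k z.1 z.2 z'.1 z'.2 hε'
      rw [Prod.mk.eta, Prod.mk.eta] at h
      have h2 : (θX + θY) * (mHigh mX mY C k - mLow mX mY C k)
          ≤ (mHigh mX mY C k - mLow mX mY C k) / 2 :=
        le_trans (mul_le_mul_of_nonneg_right hθsum hΔ0) (by linarith)
      have h3 : (Tstar : ℝ) * (ε / (Tstar : ℝ)) = ε := by
        field_simp
      rw [h3] at h
      linarith
    have hlow : ∀ z : X × X, CmatWL mX mY C (k + Tstar) z
        - (mHigh mX mY C k - mLow mX mY C k) / 2 - ε ≤ mLow mX mY C (k + Tstar) := by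
      intro z
      refine Finset.le_inf' _ _ fun z' _ => ?_
      have := hkey z z'
      linarith
    have hhigh : mHigh mX mY C (k + Tstar)
        ≤ mLow mX mY C (k + Tstar) + (mHigh mX mY C k - mLow mX mY C k) / 2 + ε := by
      refine Finset.sup'_le _ _ fun z _ => ?_
      have := hlow z
      linarith
    linarith
  have := real_le_of_forall_pos_le_add hmain
  linarith

end Stmt18Aux
namespace Stmt18Aux
set_option linter.unusedSectionVars false

open Finset

variable {X : Type*} [Fintype X] [DecidableEq X]

/-- the independent Markovian coupling -/
noncomputable def prodMC {Y : Type*} [Fintype Y] (MX : MarkovChain X) (MY : MarkovChain Y) :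
    MarkovCoupling MX MY where
  init := fun z => MX.init z.1 * MY.init z.2
  trans := fun _ z w => MX.kernel z.1 w.1 * MY.kernel z.2 w.2
  init_coupling := isCoupling_prod MX.init_prob MY.init_prob
  trans_coupling := fun _ z => isCoupling_prod (MX.kernel_prob z.1) (MY.kernel_prob z.2)

instance mcNonempty {Y : Type*} [Fintype Y] (MX : MarkovChain X) (MY : MarkovChain Y) :
    Nonempty (MarkovCoupling MX MY) := ⟨prodMC MX MY⟩

lemma law_prob {Y : Type*} [Fintype Y] [DecidableEq Y] {MX : MarkovChain X}
    {MY : MarkovChain Y} (π : MarkovCoupling MX MY) (t : ℕ) :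
    (∀ z, 0 ≤ π.law t z) ∧ ∑ z : X × Y, π.law t z = 1 := by
  induction t with
  | zero =>
    constructor
    · exact fun z => (π.init_coupling).1 z
    · exact coupling_sum_one π.init_coupling MX.init_prob
  | succ t ih =>
    have hrec : ∀ z, π.law (t+1) z = ∑ w : X × Y, π.trans t w z * π.law t w := fun z => rfl
    constructor
    · intro z
      rw [hrec]
      exact Finset.sum_nonneg fun w _ => mul_nonneg ((π.trans_coupling t w).1 z) (ih.1 w)
    · calc ∑ z : X × Y, π.law (t+1) z
          = ∑ z : X × Y, ∑ w : X × Y, π.trans t w z * π.law t w :=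
            Finset.sum_congr rfl fun z _ => hrec z
        _ = ∑ w : X × Y, (∑ z : X × Y, π.trans t w z) * π.law t w := by
            rw [Finset.sum_comm]
            exact Finset.sum_congr rfl fun w _ => by rw [Finset.sum_mul]
        _ = ∑ w : X × Y, π.law t w := by
            refine Finset.sum_congr rfl fun w _ => ?_
            rw [coupling_sum_one (π.trans_coupling t w) (MX.kernel_prob w.1), one_mul]
        _ = 1 := ih.2

lemma tsum_dirac (k : ℕ) (f : ℕ → ℝ) : ∑' t, diracN k t * f t = f k := by
  rw [tsum_eq_single k (fun b hb => by simp [diracN, hb])]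
  simp [diracN]

lemma dWL_eq (k : ℕ) {Y : Type*} [Fintype Y] (MX : MarkovChain X) (MY : MarkovChain Y)
    (C : X × Y → ℝ) :
    dWL k MX MY C = ⨅ π : MarkovCoupling MX MY, ∑ z : X × Y, C z * π.law k z := by
  unfold dWL dOTM
  refine congrArg _ (funext fun π => ?_)
  exact tsum_dirac k _

lemma dWL_bddBelow {Y : Type*} [Fintype Y] [DecidableEq Y] (MX : MarkovChain X)
    (MY : MarkovChain Y) {C : X × Y → ℝ} (hC : ∀ z, 0 ≤ C z) (k : ℕ) :
    BddBelow (Set.range fun π : MarkovCoupling MX MY => ∑ z : X × Y, C z * π.law k z) := by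
  refine ⟨0, ?_⟩
  rintro r ⟨π, rfl⟩
  exact Finset.sum_nonneg fun z _ => mul_nonneg (hC z) ((law_prob π k).1 z)

section Bounds

variable [Nonempty X] (MX MY : MarkovChain X) {C : X × X → ℝ}

lemma dWL_ge (hC : ∀ z, 0 ≤ C z) (k : ℕ) :
    mLow MX.kernel MY.kernel C k ≤ dWL k MX MY C := by
  rw [dWL_eq]
  refine le_ciInf fun π => ?_
  set CM := CmatWL MX.kernel MY.kernel C with hCM
  have hchain : ∀ t, t ≤ k → mLow MX.kernel MY.kernel C k
      ≤ ∑ z : X × X, π.law t z * CM (k - t) z := by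
    intro t
    induction t with
    | zero =>
      intro _
      rw [Nat.sub_zero]
      calc mLow MX.kernel MY.kernel C k
          = ∑ z : X × X, π.law 0 z * mLow MX.kernel MY.kernel C k := by
            rw [← Finset.sum_mul, (law_prob π 0).2, one_mul]
        _ ≤ ∑ z : X × X, π.law 0 z * CM k z := by
            refine Finset.sum_le_sum fun z _ => ?_
            exact mul_le_mul_of_nonneg_left (mLow_le k z) ((law_prob π 0).1 z)
    | succ t ih =>
      intro ht
      have htlt : t < k := by omega
      refine le_trans (ih (by omega)) ?_
      have key_w : ∀ w : X × X, CM (k - t) w ≤ ∑ z : X × X, π.trans t w z * CM (k - (t+1)) z := by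
        intro w
        have he : k - t = (k - (t+1)) + 1 := by omega
        rw [he]
        have hd : CM ((k - (t+1)) + 1) w = dW (MX.kernel w.1) (MY.kernel w.2) (CM (k - (t+1))) :=
          rfl
        rw [hd]
        refine le_trans (dW_le_coupling (MX.kernel_prob w.1) (π.trans_coupling t w)) (le_of_eq ?_)
        exact Finset.sum_congr rfl fun z _ => by ring
      calc ∑ w : X × X, π.law t w * CM (k - t) w
          ≤ ∑ w : X × X, π.law t w * ∑ z : X × X, π.trans t w z * CM (k - (t+1)) z := by
            refine Finset.sum_le_sum fun w _ => ?_
            exact mul_le_mul_of_nonneg_left (key_w w) ((law_prob π t).1 w)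
        _ = ∑ z : X × X, π.law (t+1) z * CM (k - (t+1)) z := by
            calc ∑ w : X × X, π.law t w * ∑ z : X × X, π.trans t w z * CM (k - (t+1)) z
                = ∑ w : X × X, ∑ z : X × X, (π.trans t w z * π.law t w) * CM (k - (t+1)) z := by
                  refine Finset.sum_congr rfl fun w _ => ?_
                  rw [Finset.mul_sum]
                  exact Finset.sum_congr rfl fun z _ => by ring
              _ = ∑ z : X × X, ∑ w : X × X, (π.trans t w z * π.law t w) * CM (k - (t+1)) z :=
                  Finset.sum_comm
              _ = ∑ z : X × X, π.law (t+1) z * CM (k - (t+1)) z := by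
                  refine Finset.sum_congr rfl fun z _ => ?_
                  rw [← Finset.sum_mul]
                  rfl
  have := hchain k le_rfl
  rw [Nat.sub_self] at this
  refine le_trans this (le_of_eq ?_)
  exact Finset.sum_congr rfl fun z _ => by rw [hCM]; show π.law k z * C z = C z * π.law k z; ring
  
lemma dWL_le (hC : ∀ z, 0 ≤ C z) (k : ℕ) :
    dWL k MX MY C ≤ mHigh MX.kernel MY.kernel C k := by
  set CM := CmatWL MX.kernel MY.kernel C with hCM
  refine real_le_of_forall_pos_le_add fun ε0 hε0 => ?_
  set ε := ε0 / ((k : ℝ) + 1) with hε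
  have hεpos : 0 < ε := by positivity
  -- ε-optimal transition couplings
  have hκ : ∀ (t : ℕ) (p : X × X), ∃ κp : X × X → ℝ,
      IsCoupling κp (MX.kernel p.1) (MY.kernel p.2) ∧
      (t < k → ∑ q : X × X, CM (k - 1 - t) q * κp q ≤ CM (k - t) p + ε) := by
    intro t p
    by_cases ht : t < k
    · obtain ⟨μ, hco, hle⟩ := exists_coupling_dW_lt (MX.kernel_prob p.1) (MY.kernel_prob p.2)
        (CM (k - 1 - t)) hεpos
      refine ⟨μ, hco, fun _ => ?_⟩
      have he : k - t = (k - 1 - t) + 1 := by omega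
      rw [he]
      exact hle
    · exact ⟨fun q => MX.kernel p.1 q.1 * MY.kernel p.2 q.2,
        isCoupling_prod (MX.kernel_prob p.1) (MY.kernel_prob p.2), fun h => absurd h ht⟩
  choose κ hκc hκo using hκ
  set π : MarkovCoupling MX MY :=
    { init := fun z => MX.init z.1 * MY.init z.2
      trans := fun t z => κ t z
      init_coupling := isCoupling_prod MX.init_prob MY.init_prob
      trans_coupling := fun t z => hκc t z } with hπ
  have hdown : ∀ t, t ≤ k →
      ∑ z : X × X, π.law t z * CM (k - t) z ≤ mHigh MX.kernel MY.kernel C k + t * ε := by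
    intro t
    induction t with
    | zero =>
      intro _
      rw [Nat.sub_zero]
      push_cast
      calc ∑ z : X × X, π.law 0 z * CM k z
          ≤ ∑ z : X × X, π.law 0 z * mHigh MX.kernel MY.kernel C k := by
            refine Finset.sum_le_sum fun z _ => ?_
            exact mul_le_mul_of_nonneg_left (le_mHigh k z) ((law_prob π 0).1 z)
        _ = mHigh MX.kernel MY.kernel C k := by
            rw [← Finset.sum_mul, (law_prob π 0).2, one_mul]
        _ ≤ mHigh MX.kernel MY.kernel C k + 0 * ε := by simp
    | succ t ih =>
      intro ht
      have htlt : t < k := by omega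
      have key_w : ∀ w : X × X, ∑ z : X × X, π.trans t w z * CM (k - (t+1)) z
          ≤ CM (k - t) w + ε := by
        intro w
        have he : k - 1 - t = k - (t+1) := by omega
        have h2 := hκo t w htlt
        rw [he] at h2
        refine le_trans (le_of_eq ?_) h2
        exact Finset.sum_congr rfl fun z _ => by show π.trans t w z * _ = _; rw [hπ]; ring
      calc ∑ z : X × X, π.law (t+1) z * CM (k - (t+1)) z
          = ∑ w : X × X, π.law t w * ∑ z : X × X, π.trans t w z * CM (k - (t+1)) z := by
            calc ∑ z : X × X, π.law (t+1) z * CM (k - (t+1)) z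
                = ∑ z : X × X, ∑ w : X × X, (π.trans t w z * π.law t w) * CM (k - (t+1)) z := by
                  refine Finset.sum_congr rfl fun z _ => ?_
                  rw [← Finset.sum_mul]
                  rfl
              _ = ∑ w : X × X, ∑ z : X × X, (π.trans t w z * π.law t w) * CM (k - (t+1)) z :=
                  Finset.sum_comm
              _ = _ := by
                  refine Finset.sum_congr rfl fun w _ => ?_
                  rw [Finset.mul_sum]
                  exact Finset.sum_congr rfl fun z _ => by ring
        _ ≤ ∑ w : X × X, π.law t w * (CM (k - t) w + ε) := by
            refine Finset.sum_le_sum fun w _ => ?_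
            exact mul_le_mul_of_nonneg_left (key_w w) ((law_prob π t).1 w)
        _ = (∑ w : X × X, π.law t w * CM (k - t) w) + ε := by
            have h1 : ∀ w : X × X, π.law t w * (CM (k - t) w + ε)
                = π.law t w * CM (k - t) w + π.law t w * ε := fun w => by ring
            rw [Finset.sum_congr rfl fun w _ => h1 w, Finset.sum_add_distrib,
              ← Finset.sum_mul, (law_prob π t).2, one_mul]
        _ ≤ mHigh MX.kernel MY.kernel C k + (t+1 : ℕ) * ε := by
            have := ih (by omega)
            push_cast
            push_cast at this
            linarith
  have hval : ∑ z : X × X, C z * π.law k z ≤ mHigh MX.kernel MY.kernel C k + k * ε := by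
    have := hdown k le_rfl
    rw [Nat.sub_self] at this
    refine le_trans (le_of_eq ?_) this
    exact Finset.sum_congr rfl fun z _ => by rw [hCM]; show C z * π.law k z = π.law k z * C z; ring
  have hinf : dWL k MX MY C ≤ ∑ z : X × X, C z * π.law k z := by
    rw [dWL_eq]
    exact ciInf_le (dWL_bddBelow MX MY hC k) π
  have hkε : (k : ℝ) * ε ≤ ε0 := by
    rw [hε]
    rw [div_eq_mul_inv]
    have h1 : (0:ℝ) < (k : ℝ) + 1 := by positivity
    calc (k : ℝ) * (ε0 * ((k:ℝ)+1)⁻¹) = ε0 * ((k:ℝ) * ((k:ℝ)+1)⁻¹) := by ring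
      _ ≤ ε0 * 1 := by
          refine mul_le_mul_of_nonneg_left ?_ (le_of_lt hε0)
          rw [mul_inv_le_iff₀ h1]
          linarith
      _ = ε0 := mul_one _
  linarith

end Bounds

end Stmt18Aux
namespace Stmt18Aux

lemma half_rpow_bound (Tstar : ℕ) (hT : 1 ≤ Tstar) (k : ℕ) :
    ((1:ℝ)/2) ^ (k / Tstar) ≤ 2 * (((1:ℝ)/2) ^ ((1:ℝ)/(2*(Tstar:ℝ)))) ^ k := by
  have hTpos : (0:ℝ) < (Tstar : ℝ) := by exact_mod_cast hT
  set n := k / Tstar with hn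
  -- pass to rpow
  have h2 : (0:ℝ) < 1/2 := by norm_num
  have hρk : (((1:ℝ)/2) ^ ((1:ℝ)/(2*(Tstar:ℝ)))) ^ k
      = ((1:ℝ)/2) ^ (((1:ℝ)/(2*(Tstar:ℝ))) * k) := by
    rw [← Real.rpow_natCast (((1:ℝ)/2) ^ ((1:ℝ)/(2*(Tstar:ℝ)))) k, ← Real.rpow_mul (by norm_num)]
  have hLHS : ((1:ℝ)/2) ^ n = ((1:ℝ)/2) ^ ((n : ℝ)) := by
    rw [Real.rpow_natCast]
  have hexp : ((1:ℝ)/(2*(Tstar:ℝ))) * k - 1 ≤ (n : ℝ) := by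
    have hlt : (k : ℝ) < (Tstar : ℝ) * ((n : ℝ) + 1) := by
      have h := Nat.div_add_mod k Tstar
      have h2' := Nat.mod_lt k (show 0 < Tstar by omega)
      have : k < Tstar * (n + 1) := by
        calc k = Tstar * n + k % Tstar := h.symm
          _ < Tstar * n + Tstar := by omega
          _ = Tstar * (n + 1) := by ring
      exact_mod_cast this
    have h1 : (k : ℝ) / (2 * (Tstar:ℝ)) ≤ (k : ℝ) / (Tstar:ℝ) := by
      apply div_le_div_of_nonneg_left (by positivity) hTpos
      linarith
    have h2'' : (k : ℝ) / (Tstar:ℝ) < (n : ℝ) + 1 := by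
      rw [div_lt_iff₀ hTpos]
      linarith
    have h3 : ((1:ℝ)/(2*(Tstar:ℝ))) * k = (k : ℝ) / (2 * (Tstar:ℝ)) := by ring
    rw [h3]
    linarith
  have hineq : ((1:ℝ)/2) ^ ((n : ℝ)) ≤ ((1:ℝ)/2) ^ (((1:ℝ)/(2*(Tstar:ℝ))) * k - 1) :=
    Real.rpow_le_rpow_of_exponent_ge h2 (by norm_num) hexp
  have hsplit : ((1:ℝ)/2) ^ (((1:ℝ)/(2*(Tstar:ℝ))) * k - 1)
      = 2 * ((1:ℝ)/2) ^ (((1:ℝ)/(2*(Tstar:ℝ))) * k) := by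
    rw [Real.rpow_sub h2, Real.rpow_one]
    ring
  rw [hρk, hLHS]
  rw [hsplit] at hineq
  exact hineq

end Stmt18Aux
/-- With a pseudometric cost and irreducible aperiodic kernels, the WL cost
matrices `C^{(k)}` converge exponentially fast to the constant matrix whose
value `c` is the limit of the depth-`k` WL distances between the stationary
chains: `|C^{(k)}_{ij} − c| ≤ 2 ρ^k ‖C‖_∞` for some `ρ ∈ [0,1)`. -/
theorem stmt18 {X : Type*} [Fintype X] [DecidableEq X]
    (dX : X → X → ℝ) (hdX : IsPseudometric dX)
    (mX mY : X → X → ℝ)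
    (hmX : ∀ x, IsProb (mX x)) (hmY : ∀ x, IsProb (mY x))
    (hirrX : KernelIrreducible mX) (haperX : KernelAperiodic mX)
    (hirrY : KernelIrreducible mY) (haperY : KernelAperiodic mY)
    (μX μY : X → ℝ) (hμX : IsProb μX) (hμY : IsProb μY)
    (hstatX : IsStationaryFor mX μX) (hstatY : IsStationaryFor mY μY)
    (huniqX : ∀ μ, IsProb μ → IsStationaryFor mX μ → μ = μX)
    (huniqY : ∀ μ, IsProb μ → IsStationaryFor mY μ → μ = μY) :
    ∃ c ρ : ℝ, 0 ≤ ρ ∧ ρ < 1 ∧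
      Tendsto (fun k =>
          dWL k (⟨mX, μX, hmX, hμX⟩ : MarkovChain X)
            (⟨mY, μY, hmY, hμY⟩ : MarkovChain X)
            (fun z : X × X => dX z.1 z.2)) atTop (𝓝 c) ∧
      ∀ (k : ℕ) (z : X × X),
        |CmatWL mX mY (fun z : X × X => dX z.1 z.2) k z - c| ≤
          2 * ρ ^ k * supNorm (fun z : X × X => dX z.1 z.2) := by
  classical
  open Stmt18Aux in
  -- X is nonempty since it carries a probability measure
  have hXne : Nonempty X := by
    by_contra h
    rw [not_nonempty_iff] at h
    have := hμX.2
    rw [Finset.univ_eq_empty, Finset.sum_empty] at this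
    norm_num at this
  set C₀ : X × X → ℝ := fun z => dX z.1 z.2 with hC₀
  have hC : ∀ z, 0 ≤ C₀ z := fun z => hdX.1 z.1 z.2
  set MX : MarkovChain X := ⟨mX, μX, hmX, hμX⟩ with hMX
  set MY : MarkovChain X := ⟨mY, μY, hmY, hμY⟩ with hMY
  obtain ⟨Tstar, hTs1, hcontr⟩ :=
    Stmt18Aux.contraction hmX hmY hirrX haperX hirrY haperY C₀
  set L : ℕ → ℝ := Stmt18Aux.mLow mX mY C₀ with hL
  set M : ℕ → ℝ := Stmt18Aux.mHigh mX mY C₀ with hM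
  have hLmono : Monotone L := Stmt18Aux.mLow_mono hmX hmY
  have hManti : Antitone M := Stmt18Aux.mHigh_anti hmX hmY
  have hLM : ∀ k, L k ≤ M k := fun k => Stmt18Aux.mLow_le_mHigh k
  set K : ℝ := supNorm C₀ with hK
  have hbddK : BddAbove (Set.range fun z : X × X => |C₀ z|) :=
    Set.Finite.bddAbove (Set.finite_range _)
  have hM0K : M 0 ≤ K := by
    refine Finset.sup'_le _ _ fun z _ => ?_
    calc CmatWL mX mY C₀ 0 z = C₀ z := rfl
      _ = |C₀ z| := (abs_of_nonneg (hC z)).symm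
      _ ≤ K := le_ciSup hbddK z
  have hK0 : 0 ≤ K := by
    obtain ⟨z⟩ : Nonempty (X × X) := inferInstance
    calc (0:ℝ) ≤ |C₀ z| := abs_nonneg _
      _ ≤ K := le_ciSup hbddK z
  have hL0 : 0 ≤ L 0 := Stmt18Aux.mLow_nonneg hmX hmY hC 0
  -- geometric decay of the oscillation
  have hΔanti : ∀ {a b : ℕ}, a ≤ b → M b - L b ≤ M a - L a := by
    intro a b hab
    have := hManti hab
    have := hLmono hab
    linarith
  have hΔgeom : ∀ (n r : ℕ), M (n * Tstar + r) - L (n * Tstar + r) ≤ (M r - L r) / 2 ^ n := by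
    intro n
    induction n with
    | zero => intro r; simp
    | succ n ih =>
      intro r
      have he : (n + 1) * Tstar + r = (n * Tstar + r) + Tstar := by ring
      rw [he]
      calc M ((n * Tstar + r) + Tstar) - L ((n * Tstar + r) + Tstar)
          ≤ (M (n * Tstar + r) - L (n * Tstar + r)) / 2 := hcontr (n * Tstar + r)
        _ ≤ ((M r - L r) / 2 ^ n) / 2 := by
            have := ih r
            linarith
        _ = (M r - L r) / 2 ^ (n + 1) := by
            rw [pow_succ]
            ring
  have hΔk : ∀ k, M k - L k ≤ K / 2 ^ (k / Tstar) := by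
    intro k
    have hdm := Nat.div_add_mod k Tstar
    have h1 : M k - L k ≤ (M (k % Tstar) - L (k % Tstar)) / 2 ^ (k / Tstar) := by
      have := hΔgeom (k / Tstar) (k % Tstar)
      have he : k / Tstar * Tstar + k % Tstar = k := Nat.div_add_mod' k Tstar
      rwa [he] at this
    have h2 : M (k % Tstar) - L (k % Tstar) ≤ K := by
      have := hΔanti (Nat.zero_le (k % Tstar))
      linarith
    have h3 : (0:ℝ) < 2 ^ (k / Tstar) := by positivity
    calc M k - L k ≤ (M (k % Tstar) - L (k % Tstar)) / 2 ^ (k / Tstar) := h1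
      _ ≤ K / 2 ^ (k / Tstar) := by
          exact div_le_div_of_nonneg_right h2 h3.le
  -- the decay rate
  set ρ : ℝ := ((1:ℝ)/2) ^ ((1:ℝ)/(2*(Tstar:ℝ))) with hρ
  have hρ0 : 0 ≤ ρ := Real.rpow_nonneg (by norm_num) _
  have hρ1 : ρ < 1 := by
    refine Real.rpow_lt_one (by norm_num) (by norm_num) ?_
    have : (0:ℝ) < (Tstar:ℝ) := by exact_mod_cast hTs1
    positivity
  have hΔρ : ∀ k, M k - L k ≤ 2 * ρ ^ k * K := by
    intro k
    have h1 := Stmt18Aux.half_rpow_bound Tstar hTs1 k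
    have h2 : K / 2 ^ (k / Tstar) = K * ((1:ℝ)/2) ^ (k / Tstar) := by
      rw [div_eq_mul_inv]
      congr 1
      rw [one_div, inv_pow]
    calc M k - L k ≤ K / 2 ^ (k / Tstar) := hΔk k
      _ = K * ((1:ℝ)/2) ^ (k / Tstar) := h2
      _ ≤ K * (2 * ρ ^ k) := mul_le_mul_of_nonneg_left h1 hK0
      _ = 2 * ρ ^ k * K := by ring
  -- convergence
  have hbddL : BddAbove (Set.range L) := by
    refine ⟨M 0, ?_⟩
    rintro r ⟨k, rfl⟩
    exact le_trans (hLM k) (hManti (Nat.zero_le k))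
  set c : ℝ := ⨆ k, L k with hc
  have hLc : Tendsto L atTop (𝓝 c) := tendsto_atTop_ciSup hLmono hbddL
  have hLkc : ∀ k, L k ≤ c := fun k => le_ciSup hbddL k
  have hcM : ∀ k, c ≤ M k := by
    intro k
    refine ciSup_le fun j => ?_
    rcases le_total j k with h | h
    · exact le_trans (hLmono h) (hLM k)
    · exact le_trans (hLM j) (hManti h)
  have hΔ0 : Tendsto (fun k => M k - L k) atTop (𝓝 0) := by
    have hub : Tendsto (fun k => 2 * ρ ^ k * K) atTop (𝓝 0) := by
      have := tendsto_pow_atTop_nhds_zero_of_lt_one hρ0 hρ1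
      have h2 := this.const_mul (2 * K)
      rw [mul_zero] at h2
      refine h2.congr fun k => ?_
      ring
    refine squeeze_zero (fun k => by have := hLM k; linarith) (fun k => hΔρ k) hub
  have hMc : Tendsto M atTop (𝓝 c) := by
    have := hLc.add hΔ0
    rw [add_zero] at this
    refine this.congr fun k => ?_
    ring
  have hdwl : Tendsto (fun k => dWL k MX MY C₀) atTop (𝓝 c) := by
    refine tendsto_of_tendsto_of_tendsto_of_le_of_le hLc hMc ?_ ?_
    · exact fun k => Stmt18Aux.dWL_ge MX MY hC k
    · exact fun k => Stmt18Aux.dWL_le MX MY hC k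
  refine ⟨c, ρ, hρ0, hρ1, hdwl, ?_⟩
  intro k z
  have h1 : CmatWL mX mY C₀ k z ≤ M k := Stmt18Aux.le_mHigh k z
  have h2 : L k ≤ CmatWL mX mY C₀ k z := Stmt18Aux.mLow_le k z
  have h3 := hΔρ k
  have h4 := hLkc k
  have h5 := hcM k
  rw [abs_le]
  constructor <;> [skip; skip] <;> linarith
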